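/- arXiv:1006.0792 — 9 statements merged into one kernel-verified Lean document; each statement's English description precedes it below -/
import Mathlib

section
/- Let β* = (√17 − 3)/2. For every r ∈ (0,1): ∫₀^r ((1−r)/(1−u))^{2+β*} (2/(1−u) − 2β*/(β*+2)) (u(1−u))^{β*} du = r^{1+β*}(1−r)^{β*}. -/
open intervalIntegral

/-- `r ↦ (r(1−r))^{β*}` is reproduced by the first piece of the kernel `N`. -/
theorem fixed_point_first_integral :
    ∀ r ∈ Set.Ioo (0:ℝ) 1,
      (∫ u in (0:ℝ)..r,
          ((1 - r) / (1 - u)) ^ (2 + (Real.sqrt 17 - 3) / 2) *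
            (2 / (1 - u) - 2 * ((Real.sqrt 17 - 3) / 2) / ((Real.sqrt 17 - 3) / 2 + 2)) *
            (u * (1 - u)) ^ ((Real.sqrt 17 - 3) / 2))
        = r ^ (1 + (Real.sqrt 17 - 3) / 2) * (1 - r) ^ ((Real.sqrt 17 - 3) / 2) := by
  intro r hr
  obtain ⟨hr0, hr1⟩ := hr
  set β : ℝ := (Real.sqrt 17 - 3) / 2 with hβdef
  have h17 : (Real.sqrt 17) ^ 2 = 17 := Real.sq_sqrt (by norm_num)
  have hs : (3:ℝ) < Real.sqrt 17 := by nlinarith [Real.sqrt_nonneg 17]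
  have hs5 : Real.sqrt 17 < 5 := by nlinarith [Real.sqrt_nonneg 17]
  have hβpos : 0 < β := by rw [hβdef]; linarith
  have hβ1 : β < 1 := by rw [hβdef]; linarith
  have hkey : 2 * β / (β + 2) = 1 - β := by
    have h2 : β ^ 2 + 3 * β - 2 = 0 := by rw [hβdef]; nlinarith
    have : β + 2 ≠ 0 := by linarith
    field_simp
    nlinarith
  have hr1' : (0:ℝ) < 1 - r := by linarith
  -- antiderivative
  set F : ℝ → ℝ := fun u => (1 - r) ^ (2 + β) * (u ^ (1 + β) / (1 - u) ^ 2) with hF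
  have hderiv : ∀ u ∈ Set.uIcc (0:ℝ) r,
      HasDerivAt F
        (((1 - r) / (1 - u)) ^ (2 + β) * (2 / (1 - u) - 2 * β / (β + 2)) *
          (u * (1 - u)) ^ β) u := by
    intro u hu
    rw [Set.uIcc_of_le (le_of_lt hr0)] at hu
    obtain ⟨hu0, hur⟩ := hu
    have hu1 : 0 < 1 - u := by linarith
    have hu1' : (1 - u) ≠ 0 := ne_of_gt hu1
    have h1 : HasDerivAt (fun x : ℝ => x ^ (1 + β)) ((1 + β) * u ^ β) u := by
      have := Real.hasDerivAt_rpow_const (x := u) (p := 1 + β) (Or.inr (by linarith))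
      simpa using this
    have h2 : HasDerivAt (fun x : ℝ => (1 - x) ^ 2) (2 * (1 - u) ^ 1 * (-1)) u := by
      exact (HasDerivAt.const_sub 1 (hasDerivAt_id u)).pow 2
    have h3 := ((h1.div h2 (pow_ne_zero 2 hu1')).const_mul ((1 - r) ^ (2 + β)))
    convert h3 using 1
    case e'_4 => rfl
    case e'_5 => rfl
    case e'_8 => rfl
    rw [hkey]
    have e1 : (u * (1 - u)) ^ β = u ^ β * (1 - u) ^ β :=
      Real.mul_rpow hu0 (le_of_lt hu1)
    have e2 : ((1 - r) / (1 - u)) ^ (2 + β) = (1 - r) ^ (2 + β) / (1 - u) ^ (2 + β) :=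
      Real.div_rpow hr1'.le hu1.le _
    have e3 : (1 - u) ^ (2 + β) = (1 - u) ^ (2:ℕ) * (1 - u) ^ β := by
      rw [Real.rpow_add hu1]; norm_num [Real.rpow_natCast]
    have hβ' : (1 - u) ^ β ≠ 0 := ne_of_gt (Real.rpow_pos_of_pos hu1 β)
    have e4 : u ^ (1 + β) = u * u ^ β := by
      rw [Real.rpow_add' hu0 (by positivity), Real.rpow_one]
    rw [e1, e2, e3, e4]
    field_simp
    ring
  have hcont : ContinuousOn
      (fun u => ((1 - r) / (1 - u)) ^ (2 + β) * (2 / (1 - u) - 2 * β / (β + 2)) *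
        (u * (1 - u)) ^ β) (Set.uIcc (0:ℝ) r) := by
    rw [Set.uIcc_of_le (le_of_lt hr0)]
    have hne : ∀ u ∈ Set.Icc (0:ℝ) r, (1 - u) ≠ 0 := by
      intro u hu; have := hu.2; intro h; nlinarith [hu.1]
    apply ContinuousOn.mul
    apply ContinuousOn.mul
    · apply ContinuousOn.rpow_const
      · exact (continuousOn_const.div (continuousOn_const.sub continuousOn_id)
          hne)
      · intro u hu
        left
        exact div_ne_zero (by linarith) (hne u hu)
    · apply ContinuousOn.sub
      · exact continuousOn_const.div (continuousOn_const.sub continuousOn_id) hne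
      · exact continuousOn_const
    · apply ContinuousOn.rpow_const
      · exact (continuousOn_id.mul (continuousOn_const.sub continuousOn_id))
      · intro u hu; right; exact le_of_lt hβpos
  have hint := intervalIntegral.integral_eq_sub_of_hasDerivAt hderiv
    (hcont.intervalIntegrable)
  rw [hint]
  have hF0 : F 0 = 0 := by
    simp [hF, Real.zero_rpow (by positivity : (1:ℝ) + β ≠ 0)]
  have hFr : F r = r ^ (1 + β) * (1 - r) ^ β := by
    rw [hF]
    have e3 : (1 - r) ^ (2 + β) = (1 - r) ^ (2:ℕ) * (1 - r) ^ β := by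
      rw [Real.rpow_add hr1']; norm_num [Real.rpow_natCast]
    rw [e3]
    field_simp
  rw [hF0, hFr]
  ring
end

section
/- Let β* = (√17 − 3)/2. For every r ∈ (0,1): ∫_r^1 (r/u)^{2+β*} (2/u − 2β*/(β*+2)) (u(1−u))^{β*} du = r^{β*}(1−r)^{β*+1}. -/
open intervalIntegral

/-- `r ↦ (r(1−r))^{β*}` is reproduced by the second piece of the kernel `N`. -/
theorem fixed_point_second_integral :
    ∀ r ∈ Set.Ioo (0:ℝ) 1,
      (∫ u in r..(1:ℝ),
          (r / u) ^ (2 + (Real.sqrt 17 - 3) / 2) *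
            (2 / u - 2 * ((Real.sqrt 17 - 3) / 2) / ((Real.sqrt 17 - 3) / 2 + 2)) *
            (u * (1 - u)) ^ ((Real.sqrt 17 - 3) / 2))
        = r ^ ((Real.sqrt 17 - 3) / 2) * (1 - r) ^ ((Real.sqrt 17 - 3) / 2 + 1) := by
  intro r hr
  obtain ⟨hr0, hr1⟩ := hr
  set β : ℝ := (Real.sqrt 17 - 3) / 2 with hβdef
  have hs : Real.sqrt 17 ^ 2 = 17 := Real.sq_sqrt (by norm_num)
  have hs0 : 0 ≤ Real.sqrt 17 := Real.sqrt_nonneg 17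
  have hβ0 : 0 < β := by
    have : 3 < Real.sqrt 17 := by nlinarith
    simp only [hβdef]; linarith
  have hβ1 : β < 1 := by
    have : Real.sqrt 17 < 5 := by nlinarith
    simp only [hβdef]; linarith
  have hβ2 : β + 2 ≠ 0 := by positivity
  have hquad : β ^ 2 + 3 * β - 2 = 0 := by
    simp only [hβdef]; nlinarith
  have hc : 2 * β / (β + 2) = 1 - β := by
    field_simp
    nlinarith
  rw [hc]
  have hrle : r ≤ (1:ℝ) := le_of_lt hr1
  -- antiderivative
  set F : ℝ → ℝ := fun u => r ^ (2 + β) * (-((1 - u) ^ (β + 1)) / u ^ 2) with hF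
  have hderiv : ∀ u ∈ Set.uIcc r (1:ℝ),
      HasDerivAt F ((r / u) ^ (2 + β) * (2 / u - (1 - β)) * ((u * (1 - u)) ^ β)) u := by
    intro u hu
    rw [Set.uIcc_of_le hrle] at hu
    obtain ⟨hu0', hu1⟩ := hu
    have hu0 : 0 < u := lt_of_lt_of_le hr0 hu0'
    have h1u : 0 ≤ 1 - u := by linarith
    -- derivative of (1-u)^(β+1)
    have h1 : HasDerivAt (fun u : ℝ => (1 - u) ^ (β + 1))
        (((β + 1) * (1 - u) ^ β) * (-1)) u := by
      have := (Real.hasDerivAt_rpow_const (x := 1 - u) (p := β + 1)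
        (Or.inr (by linarith))).comp u ((hasDerivAt_id u).const_sub 1)
      rw [show β + 1 - 1 = β by ring] at this
      exact this
    have h2 : HasDerivAt (fun u : ℝ => u ^ 2) (2 * u) u := by
      simpa using (hasDerivAt_pow 2 u)
    have h3 : HasDerivAt (fun u : ℝ => -((1 - u) ^ (β + 1)) / u ^ 2)
        ((-(((β + 1) * (1 - u) ^ β) * (-1)) * u ^ 2 - (-((1 - u) ^ (β + 1))) * (2 * u)) /
          (u ^ 2) ^ 2) u :=
      HasDerivAt.div h1.neg h2 (by positivity)
    have h4 : HasDerivAt F _ u := h3.const_mul (r ^ (2 + β))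
    convert h4 using 1
    -- now the pointwise algebra
    have hA : (1 - u) ^ (β + 1) = (1 - u) ^ β * (1 - u) := by
      rcases eq_or_lt_of_le h1u with h | h
      · rw [← h, Real.zero_rpow (by linarith), Real.zero_rpow (by linarith), zero_mul]
      · rw [Real.rpow_add_one (ne_of_gt h)]
    rw [Real.div_rpow hr0.le hu0.le, Real.mul_rpow hu0.le h1u,
      show (2:ℝ) + β = β + 2 by ring, Real.rpow_add hu0,
      show ((2:ℝ):ℝ) = ((2:ℕ):ℝ) by norm_num, Real.rpow_natCast, hA]
    have huβ : 0 < u ^ β := Real.rpow_pos_of_pos hu0 β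
    field_simp
    ring
  have hcont : IntervalIntegrable
      (fun u => (r / u) ^ (2 + β) * (2 / u - (1 - β)) * ((u * (1 - u)) ^ β))
      MeasureTheory.volume r 1 := by
    apply ContinuousOn.intervalIntegrable
    rw [Set.uIcc_of_le hrle]
    have hne : ∀ u ∈ Set.Icc r (1:ℝ), u ≠ 0 := fun u hu =>
      ne_of_gt (lt_of_lt_of_le hr0 hu.1)
    apply ContinuousOn.mul
    apply ContinuousOn.mul
    · exact (continuousOn_const.div continuousOn_id hne).rpow_const
        (fun u hu => Or.inr (by positivity))
    · exact (continuousOn_const.div continuousOn_id hne).sub continuousOn_const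
    · exact (continuousOn_id.mul (continuousOn_const.sub continuousOn_id)).rpow_const
        (fun u hu => Or.inr hβ0.le)
  rw [intervalIntegral.integral_eq_sub_of_hasDerivAt hderiv hcont]
  simp only [hF]
  rw [show (1:ℝ) - 1 = 0 by ring, Real.zero_rpow (by linarith)]
  rw [show (2:ℝ) + β = β + 2 by ring, Real.rpow_add hr0,
    show ((2:ℝ):ℝ) = ((2:ℕ):ℝ) by norm_num, Real.rpow_natCast]
  field_simp
  ring
end

section
/- Let β* = (√17−3)/2 and for r, u ∈ (0,1) define g_r(u) = 1_{0<u<r} ((1−r)/(1−u))^{2+β*} (2/(1−u) − 2β*/(β*+2)) + 1_{r≤u<1} (r/u)^{2+β*} (2/u − 2β*/(β*+2)). Then for every u ∈ (0,1), ∫₀¹ g_r(u) dr = 1. -/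
open intervalIntegral

/-- The kernel `g_r(u)` of the integral operator `N` from the first-moment
equation, with `β* = (√17−3)/2`. -/
noncomputable def kernelG (r u : ℝ) : ℝ :=
  (if 0 < u ∧ u < r then
      ((1 - r) / (1 - u)) ^ (2 + (Real.sqrt 17 - 3) / 2) *
        (2 / (1 - u) - 2 * ((Real.sqrt 17 - 3) / 2) / ((Real.sqrt 17 - 3) / 2 + 2))
    else 0)
  + (if r ≤ u ∧ u < 1 then
      (r / u) ^ (2 + (Real.sqrt 17 - 3) / 2) *
        (2 / u - 2 * ((Real.sqrt 17 - 3) / 2) / ((Real.sqrt 17 - 3) / 2 + 2))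
    else 0)

/-- For every `u ∈ (0,1)`, `∫₀¹ g_r(u) dr = 1`. -/
theorem kernelG_integral_eq_one :
    ∀ u ∈ Set.Ioo (0:ℝ) 1, (∫ r in (0:ℝ)..1, kernelG r u) = 1 := by
  intro u hu
  obtain ⟨hu0, hu1⟩ := hu
  have hs2 : Real.sqrt 17 ^ 2 = 17 := Real.sq_sqrt (by norm_num)
  have hs4 : 4 < Real.sqrt 17 := by nlinarith [Real.sqrt_nonneg 17]
  set s : ℝ := Real.sqrt 17 with hs
  set p : ℝ := 2 + (s - 3) / 2 with hp
  have hp0 : (0:ℝ) < p := by rw [hp]; linarith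
  set K : ℝ := 2 * ((s - 3) / 2) / ((s - 3) / 2 + 2) with hK
  set C : ℝ := 2 / u - K with hC
  set D : ℝ := 2 / (1 - u) - K with hD
  have hu1' : (0:ℝ) < 1 - u := by linarith
  have hup : (0:ℝ) < u ^ p := Real.rpow_pos_of_pos hu0 p
  have h1up : (0:ℝ) < (1 - u) ^ p := Real.rpow_pos_of_pos hu1' p
  -- pointwise descriptions of the kernel on the two pieces
  have heq1 : ∀ r ∈ Set.Ioc (0:ℝ) u, kernelG r u = r ^ p * (C / u ^ p) := by
    intro r ⟨hr0, hru⟩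
    have h1 : ¬ (0 < u ∧ u < r) := by push_neg; intro _; linarith
    have h2 : r ≤ u ∧ u < 1 := ⟨hru, hu1⟩
    simp only [kernelG, if_neg h1, if_pos h2, zero_add, ← hs, ← hp, ← hK, ← hC]
    rw [Real.div_rpow hr0.le hu0.le]
    ring
  have heq2 : ∀ r ∈ Set.Ioc u (1:ℝ), kernelG r u = (1 - r) ^ p * (D / (1 - u) ^ p) := by
    intro r ⟨hur, hr1⟩
    have h1 : 0 < u ∧ u < r := ⟨hu0, hur⟩
    have h2 : ¬ (r ≤ u ∧ u < 1) := by push_neg; intro h; linarith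
    simp only [kernelG, if_pos h1, if_neg h2, add_zero, ← hs, ← hp, ← hK, ← hD]
    rw [Real.div_rpow (by linarith) hu1'.le]
    ring
  -- the simple comparison functions are integrable
  have hc1 : Continuous fun r : ℝ => r ^ p * (C / u ^ p) :=
    (continuous_id.rpow_const fun x => Or.inr hp0.le).mul continuous_const
  have hc2 : Continuous fun r : ℝ => (1 - r) ^ p * (D / (1 - u) ^ p) :=
    (((continuous_const.sub continuous_id).rpow_const fun x => Or.inr hp0.le)).mul
      continuous_const
  have hi1 : IntervalIntegrable (fun r => kernelG r u) MeasureTheory.volume 0 u := by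
    rw [intervalIntegrable_iff, Set.uIoc_of_le hu0.le]
    exact (hc1.integrableOn_Ioc.congr_fun
      (fun r hr => (heq1 r hr).symm) measurableSet_Ioc)
  have hi2 : IntervalIntegrable (fun r => kernelG r u) MeasureTheory.volume u 1 := by
    rw [intervalIntegrable_iff, Set.uIoc_of_le hu1.le]
    exact (hc2.integrableOn_Ioc.congr_fun
      (fun r hr => (heq2 r hr).symm) measurableSet_Ioc)
  have hsplit : (∫ r in (0:ℝ)..1, kernelG r u)
      = (∫ r in (0:ℝ)..u, kernelG r u) + ∫ r in u..(1:ℝ), kernelG r u :=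
    (integral_add_adjacent_intervals hi1 hi2).symm
  have hint1 : (∫ r in (0:ℝ)..u, kernelG r u) = u ^ (p + 1) / (p + 1) * (C / u ^ p) := by
    rw [intervalIntegral.integral_congr_ae (g := fun r => r ^ p * (C / u ^ p))
      (Filter.Eventually.of_forall fun r hr =>
        heq1 r (by rwa [Set.uIoc_of_le hu0.le] at hr))]
    rw [intervalIntegral.integral_mul_const, integral_rpow (Or.inl (by linarith))]
    rw [Real.zero_rpow (by linarith)]
    ring
  have hint2 : (∫ r in u..(1:ℝ), kernelG r u)
      = (1 - u) ^ (p + 1) / (p + 1) * (D / (1 - u) ^ p) := by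
    rw [intervalIntegral.integral_congr_ae (g := fun r => (1 - r) ^ p * (D / (1 - u) ^ p))
      (Filter.Eventually.of_forall fun r hr =>
        heq2 r (by rwa [Set.uIoc_of_le hu1.le] at hr))]
    rw [intervalIntegral.integral_mul_const]
    have := intervalIntegral.integral_comp_sub_left (a := u) (b := 1)
      (fun x : ℝ => x ^ p) 1
    rw [this, integral_rpow (Or.inl (by linarith)),
      show (1:ℝ) - 1 = 0 by norm_num, Real.zero_rpow (by linarith)]
    ring
  rw [hsplit, hint1, hint2]
  -- now pure algebra
  have hup1 : u ^ (p + 1) = u ^ p * u := by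
    rw [Real.rpow_add hu0, Real.rpow_one]
  have h1up1 : (1 - u) ^ (p + 1) = (1 - u) ^ p * (1 - u) := by
    rw [Real.rpow_add hu1', Real.rpow_one]
  rw [hup1, h1up1]
  have hq : p + 1 ≠ 0 := by linarith
  have e : u ^ p * u / (p + 1) * (C / u ^ p) + (1 - u) ^ p * (1 - u) / (p + 1) * (D / (1 - u) ^ p)
      = (u * C + (1 - u) * D) / (p + 1) := by
    field_simp
  rw [e]
  have hsum : u * C + (1 - u) * D = p + 1 := by
    rw [hC, hD, hK, hp]
    have hd1 : (s - 3) / 2 + 2 ≠ 0 := by linarith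
    have hd1' : s - 3 + 2 * 2 ≠ 0 := by linarith
    have hd2 : 1 + s ≠ 0 := by linarith
    field_simp
    rw [show s - 3 + 2 ^ 2 = 1 + s by ring]
    field_simp
    linear_combination (-1) * hs2
  rw [hsum, div_self hq]
end

section
/- For r ∈ (0,1) and any nonnegative measurable f on [0,1]², one has 2∬_{[0,1]²} 1_{u₁<u₂<r} f((r−(u₂−u₁))/(1−(u₂−u₁))) du₁ du₂ = 2(1−r)² ∫₀^r f(r₁) r₁/(1−r₁)³ dr₁. -/
open MeasureTheory

lemma my_lintegral_image {s : Set ℝ} {f f' : ℝ → ℝ} (hs : MeasurableSet s)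
    (hf' : ∀ x ∈ s, HasDerivWithinAt f (f' x) s x) (hf : Set.InjOn f s) (g : ℝ → ENNReal) :
    ∫⁻ x in f '' s, g x = ∫⁻ x in s, ENNReal.ofReal |f' x| * g (f x) := by
  simpa only [ContinuousLinearMap.det_toSpanSingleton] using
    lintegral_image_eq_lintegral_abs_det_fderiv_mul volume hs
      (fun x hx => (hf' x hx).hasFDerivWithinAt) hf g

/-- Density of `Y₁ = (r − (U₂−U₁))/(1 − (U₂−U₁))` on the event `{U₁ < U₂ < r}`,
for any nonnegative measurable `f`. -/
theorem density_Y1_below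
    (r : ℝ) (hr : r ∈ Set.Ioo (0:ℝ) 1) (f : ℝ → ENNReal) (hf : Measurable f) :
    2 * (∫⁻ u in Set.Icc (0:ℝ) 1 ×ˢ Set.Icc (0:ℝ) 1,
        Set.indicator {q : ℝ × ℝ | q.1 < q.2 ∧ q.2 < r}
          (fun q => f ((r - (q.2 - q.1)) / (1 - (q.2 - q.1)))) u)
      = ENNReal.ofReal (2 * (1 - r) ^ 2) *
        ∫⁻ x in Set.Ioo (0:ℝ) r, f x * ENNReal.ofReal (x / (1 - x) ^ 3) := by
  obtain ⟨hr0, hr1⟩ := hr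
  set φ : ℝ → ℝ := fun t => (r - t) / (1 - t) with hφdef
  have hφm : Measurable φ := (measurable_const.sub measurable_id).div
    (measurable_const.sub measurable_id)
  -- basic facts about φ on (0, r)
  have hmaps : ∀ t ∈ Set.Ioo (0:ℝ) r, φ t ∈ Set.Ioo (0:ℝ) r := by
    intro t ht
    obtain ⟨ht0, htr⟩ := ht
    have h1t : (0:ℝ) < 1 - t := by linarith
    refine ⟨div_pos (by linarith) h1t, ?_⟩
    rw [div_lt_iff₀ h1t]; nlinarith
  have hone : ∀ t ∈ Set.Ioo (0:ℝ) r, 1 - φ t = (1 - r) / (1 - t) := by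
    intro t ht
    have h1t : (1:ℝ) - t ≠ 0 := by intro h; nlinarith [ht.2]
    simp only [hφdef]
    field_simp
    ring
  have hinv : ∀ t ∈ Set.Ioo (0:ℝ) r, φ (φ t) = t := by
    intro t ht
    have h1t : (1:ℝ) - t ≠ 0 := by intro h; nlinarith [ht.2]
    have h1r : (1:ℝ) - r ≠ 0 := by intro h; nlinarith
    have hd : 1 - φ t = (1 - r) / (1 - t) := hone t ht
    have hd0 : 1 - φ t ≠ 0 := by rw [hd]; exact div_ne_zero h1r h1t
    show (r - φ t) / (1 - φ t) = t
    rw [div_eq_iff hd0, hd]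
    simp only [hφdef]
    field_simp
    ring
  have hinj : Set.InjOn φ (Set.Ioo 0 r) := fun a ha b hb h => by
    rw [← hinv a ha, ← hinv b hb, h]
  have himg : φ '' Set.Ioo 0 r = Set.Ioo 0 r := by
    apply Set.Subset.antisymm
    · rintro _ ⟨t, ht, rfl⟩; exact hmaps t ht
    · intro x hx; exact ⟨φ x, hmaps x hx, hinv x hx⟩
  have hderiv : ∀ t ∈ Set.Ioo (0:ℝ) r,
      HasDerivWithinAt φ ((r - 1) / (1 - t) ^ 2) (Set.Ioo 0 r) t := by
    intro t ht
    have h1t : (1:ℝ) - t ≠ 0 := by intro h; nlinarith [ht.2]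
    have h := (((hasDerivAt_id t).const_sub r).div
      ((hasDerivAt_id t).const_sub 1) h1t).hasDerivWithinAt (s := Set.Ioo 0 r)
    convert h using 1
    · rfl
    · rfl
    · rfl
    · simp only [id]
      ring
  -- Step B : change of variables
  have stepB : ∫⁻ t in Set.Ioo (0:ℝ) r, ENNReal.ofReal (r - t) * f (φ t)
      = ENNReal.ofReal ((1 - r) ^ 2) *
        ∫⁻ x in Set.Ioo (0:ℝ) r, f x * ENNReal.ofReal (x / (1 - x) ^ 3) := by
    have key := my_lintegral_image measurableSet_Ioo hderiv hinj
      (fun x => f x * ENNReal.ofReal (x / (1 - x) ^ 3))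
    rw [himg] at key
    rw [key, ← lintegral_const_mul' _ _ ENNReal.ofReal_ne_top]
    refine setLIntegral_congr_fun measurableSet_Ioo ?_
    intro t ht
    beta_reduce
    obtain ⟨ht0, htr⟩ := ht
    have h1tpos : (0:ℝ) < 1 - t := by linarith
    have h1t : (1:ℝ) - t ≠ 0 := ne_of_gt h1tpos
    have h1rpos : (0:ℝ) < 1 - r := by linarith
    have habs : |(r - 1) / (1 - t) ^ 2| = (1 - r) / (1 - t) ^ 2 := by
      rw [abs_div, abs_of_nonpos (by linarith), abs_of_pos (by positivity)]
      ring
    have hratio : φ t / (1 - φ t) ^ 3 = (r - t) * (1 - t) ^ 2 / (1 - r) ^ 3 := by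
      rw [hone t ⟨ht0, htr⟩]
      simp only [hφdef]
      rw [div_pow]
      field_simp
    rw [habs, hratio]
    have e1 : ENNReal.ofReal ((1 - r) ^ 2) *
        (ENNReal.ofReal ((1 - r) / (1 - t) ^ 2) *
          (f (φ t) * ENNReal.ofReal ((r - t) * (1 - t) ^ 2 / (1 - r) ^ 3)))
        = (ENNReal.ofReal ((1 - r) ^ 2) * ENNReal.ofReal ((1 - r) / (1 - t) ^ 2)
            * ENNReal.ofReal ((r - t) * (1 - t) ^ 2 / (1 - r) ^ 3)) * f (φ t) := by
      ring
    rw [e1, ← ENNReal.ofReal_mul (by positivity), ← ENNReal.ofReal_mul (by positivity)]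
    have e2 : (1 - r) ^ 2 * ((1 - r) / (1 - t) ^ 2) * ((r - t) * (1 - t) ^ 2 / (1 - r) ^ 3)
        = r - t := by field_simp
    rw [e2]
  -- Step A : reduce the double integral to a single integral
  set T : Set (ℝ × ℝ) := {q | 0 ≤ q.1 ∧ q.1 < q.2 ∧ q.2 < r} with hTdef
  have hTmeas : MeasurableSet T :=
    (measurableSet_le measurable_const measurable_fst).inter
      ((measurableSet_lt measurable_fst measurable_snd).inter
        (measurableSet_lt measurable_snd measurable_const))
  have hS : MeasurableSet {q : ℝ × ℝ | q.1 < q.2 ∧ q.2 < r} :=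
    (measurableSet_lt measurable_fst measurable_snd).inter
      (measurableSet_lt measurable_snd measurable_const)
  have hsetEq : {q : ℝ × ℝ | q.1 < q.2 ∧ q.2 < r} ∩
      (Set.Icc (0:ℝ) 1 ×ˢ Set.Icc (0:ℝ) 1) = T := by
    ext q
    simp only [Set.mem_inter_iff, Set.mem_setOf_eq, Set.mem_prod, Set.mem_Icc, hTdef]
    constructor
    · rintro ⟨⟨h1, h2⟩, ⟨h3, _⟩, _⟩; exact ⟨h3, h1, h2⟩
    · rintro ⟨h1, h2, h3⟩
      exact ⟨⟨h2, h3⟩, ⟨h1, by linarith⟩, ⟨by linarith, by linarith⟩⟩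
  have hFm : Measurable (fun q : ℝ × ℝ => f (φ (q.2 - q.1))) :=
    hf.comp (hφm.comp (measurable_snd.sub measurable_fst))
  set T2 : Set (ℝ × ℝ) := {p | 0 ≤ p.1 ∧ 0 < p.2 ∧ p.2 < r - p.1} with hT2def
  have hT2meas : MeasurableSet T2 :=
    (measurableSet_le measurable_const measurable_fst).inter
      ((measurableSet_lt measurable_const measurable_snd).inter
        (measurableSet_lt measurable_snd (measurable_const.sub measurable_fst)))
  have stepA : (∫⁻ u in Set.Icc (0:ℝ) 1 ×ˢ Set.Icc (0:ℝ) 1,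
        Set.indicator {q : ℝ × ℝ | q.1 < q.2 ∧ q.2 < r}
          (fun q => f ((r - (q.2 - q.1)) / (1 - (q.2 - q.1)))) u)
      = ∫⁻ t in Set.Ioo (0:ℝ) r, ENNReal.ofReal (r - t) * f (φ t) := by
    rw [lintegral_indicator hS, Measure.restrict_restrict hS, hsetEq,
      ← lintegral_indicator hTmeas, Measure.volume_eq_prod,
      lintegral_prod _ (hFm.indicator hTmeas).aemeasurable]
    have hinner : ∀ u1 : ℝ,
        (∫⁻ u2, Set.indicator T (fun q : ℝ × ℝ => f (φ (q.2 - q.1))) (u1, u2))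
        = ∫⁻ t, Set.indicator T2 (fun p : ℝ × ℝ => f (φ p.2)) (u1, t) := by
      intro u1
      by_cases h0 : 0 ≤ u1
      · have eL : (fun u2 => Set.indicator T (fun q : ℝ × ℝ => f (φ (q.2 - q.1))) (u1, u2))
            = Set.indicator (Set.Ioo u1 r) (fun u2 => f (φ (u2 - u1))) := by
          funext u2
          simp only [Set.indicator_apply, hTdef, Set.mem_setOf_eq, Set.mem_Ioo, h0, true_and]
        have eR : (fun t => Set.indicator T2 (fun p : ℝ × ℝ => f (φ p.2)) (u1, t))
            = Set.indicator (Set.Ioo 0 (r - u1)) (fun t => f (φ t)) := by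
          funext t
          simp only [Set.indicator_apply, hT2def, Set.mem_setOf_eq, Set.mem_Ioo, h0, true_and]
        rw [eL, eR, lintegral_indicator measurableSet_Ioo, lintegral_indicator measurableSet_Ioo]
        have := (measurePreserving_add_right volume u1).setLIntegral_comp_emb
          ((Homeomorph.addRight u1).measurableEmbedding)
          (fun u2 => f (φ (u2 - u1))) (Set.Ioo 0 (r - u1))
        rw [Set.image_add_const_Ioo, zero_add, sub_add_cancel] at this
        rw [← this]
        congr 1
        funext t
        rw [add_sub_cancel_right]
      · have eL : (fun u2 => Set.indicator T (fun q : ℝ × ℝ => f (φ (q.2 - q.1))) (u1, u2))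
            = fun _ => 0 := by
          funext u2
          simp only [Set.indicator_apply, hTdef, Set.mem_setOf_eq, h0, false_and, if_false]
        have eR : (fun t => Set.indicator T2 (fun p : ℝ × ℝ => f (φ p.2)) (u1, t))
            = fun _ => 0 := by
          funext t
          simp only [Set.indicator_apply, hT2def, Set.mem_setOf_eq, h0, false_and, if_false]
        rw [eL, eR]
    rw [lintegral_congr hinner]
    have hswap := lintegral_lintegral_swap (μ := volume) (ν := volume)
      (f := fun u1 t => Set.indicator T2 (fun p : ℝ × ℝ => f (φ p.2)) (u1, t))
      (by exact ((hf.comp (hφm.comp measurable_snd)).indicator hT2meas).aemeasurable)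
    rw [hswap]
    have houter : ∀ t : ℝ,
        (∫⁻ u1, Set.indicator T2 (fun p : ℝ × ℝ => f (φ p.2)) (u1, t))
        = Set.indicator (Set.Ioo 0 r) (fun t => ENNReal.ofReal (r - t) * f (φ t)) t := by
      intro t
      by_cases h0 : 0 < t
      · have eL : (fun u1 => Set.indicator T2 (fun p : ℝ × ℝ => f (φ p.2)) (u1, t))
            = Set.indicator (Set.Ico 0 (r - t)) (fun _ => f (φ t)) := by
          funext u1
          simp only [Set.indicator_apply, hT2def, Set.mem_setOf_eq, Set.mem_Ico]
          refine if_congr ?_ rfl rfl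
          constructor
          · rintro ⟨h1, _, h2⟩; exact ⟨h1, by linarith⟩
          · rintro ⟨h1, h2⟩; exact ⟨h1, h0, by linarith⟩
        rw [eL, lintegral_indicator measurableSet_Ico, setLIntegral_const,
          Real.volume_Ico, sub_zero]
        by_cases htr : t < r
        · rw [Set.indicator_of_mem (Set.mem_Ioo.mpr ⟨h0, htr⟩), mul_comm]
        · rw [Set.indicator_of_notMem (fun h => htr h.2)]
          have : ENNReal.ofReal (r - t) = 0 := by
            rw [ENNReal.ofReal_eq_zero]; linarith [not_lt.mp htr]
          rw [this, mul_zero]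
      · have eL : (fun u1 => Set.indicator T2 (fun p : ℝ × ℝ => f (φ p.2)) (u1, t))
            = fun _ => 0 := by
          funext u1
          simp only [Set.indicator_apply, hT2def, Set.mem_setOf_eq, h0, false_and, and_false,
            if_false]
        rw [eL, lintegral_zero, Set.indicator_of_notMem (fun h => h0 h.1)]
    rw [lintegral_congr houter, lintegral_indicator measurableSet_Ioo]
  rw [stepA, stepB, ENNReal.ofReal_mul (by norm_num), ENNReal.ofReal_ofNat, ← mul_assoc]
end

section
/- Let (Xₙ) be the Markov chain on positive integers with q_{k,ℓ} = 1/(k+1)·1_{1≤ℓ≤k+1}, started at X₀ = 4, and let T = inf{n ≥ 0 : Xₙ ≤ 3}. Then for every n ≥ 0, 2ⁿ P(T > n) ≤ 1. -/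
open MeasureTheory
open Finset

lemma sum_Icc_key (m : ℕ) (hm : 3 ≤ m) :
    ∑ ℓ ∈ Finset.Icc 4 (m+1), ((ℓ:ℝ) - 2) = ((m:ℝ)-2)*((m:ℝ)+1)/2 := by
  induction m, hm using Nat.le_induction with
  | base => norm_num
  | succ m hm ih =>
    rw [Finset.sum_Icc_succ_top (by omega), ih]
    push_cast; ring

lemma key_sum (m N : ℕ) (hm : 4 ≤ m) (hmN : m + 1 ≤ N) :
    ∑ ℓ ∈ Finset.Icc 4 N, ((ℓ:ℝ) - 2) * (if 1 ≤ ℓ ∧ ℓ ≤ m + 1 then 1/((m:ℝ)+1) else 0)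
      = ((m:ℝ) - 2)/2 := by
  have h1 : ∀ ℓ ∈ Finset.Icc 4 N, ((ℓ:ℝ)-2) * (if 1 ≤ ℓ ∧ ℓ ≤ m + 1 then 1/((m:ℝ)+1) else 0)
      = if ℓ ∈ Finset.Icc 4 (m+1) then ((ℓ:ℝ)-2) * (1/((m:ℝ)+1)) else 0 := by
    intro ℓ hℓ
    simp only [Finset.mem_Icc] at hℓ ⊢
    by_cases h : ℓ ≤ m + 1 <;> simp [h, (by omega : 1 ≤ ℓ), (by omega : 4 ≤ ℓ)]
  rw [Finset.sum_congr rfl h1, Finset.sum_ite_mem]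
  have h2 : Finset.Icc 4 N ∩ Finset.Icc 4 (m+1) = Finset.Icc 4 (m+1) := by
    apply Finset.inter_eq_right.2
    intro x hx; simp only [Finset.mem_Icc] at hx ⊢; omega
  rw [h2, ← Finset.sum_mul, sum_Icc_key m (by omega)]
  have : (m:ℝ) + 1 ≠ 0 := by positivity
  field_simp

lemma integrable_of_bound' {Ω : Type*} [MeasurableSpace Ω] {μ : Measure Ω} [IsFiniteMeasure μ]
    {f : Ω → ℝ} (hf : AEStronglyMeasurable f μ) (C : ℝ) (h : ∀ᵐ ω ∂μ, |f ω| ≤ C) :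
    Integrable f μ :=
  ⟨hf, HasFiniteIntegral.of_bounded (C := C) (by simpa [Real.norm_eq_abs] using h)⟩

/-- For the Markov chain with `X_{n+1}` uniform on `{1,…,X_n+1}` started at
`X₀ = 4`, with `T = inf{n : X_n ≤ 3}`, one has `2ⁿ P(T > n) ≤ 1`, i.e.
`2ⁿ P(∀ k ≤ n, X_k ≥ 4) ≤ 1`. -/
theorem survival_probability_bound
    {Ω : Type*} {mΩ : MeasurableSpace Ω} (μ : Measure Ω) [IsProbabilityMeasure μ]
    (ℱ : Filtration ℕ mΩ) (X : ℕ → Ω → ℕ)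
    (hadapted : ∀ n, Measurable[ℱ n] (X n))
    (hpos : ∀ n ω, 1 ≤ X n ω)
    (hstart : ∀ ω, X 0 ω = 4)
    (hkernel : ∀ n : ℕ, ∀ ℓ : ℕ,
      (μ[(fun ω => if X (n + 1) ω = ℓ then (1:ℝ) else 0) | ℱ n])
        =ᵐ[μ] fun ω => if 1 ≤ ℓ ∧ ℓ ≤ X n ω + 1 then 1 / (X n ω + 1 : ℝ) else 0) :
    ∀ n : ℕ, (2:ℝ) ^ n * (μ {ω | ∀ k ≤ n, 4 ≤ X k ω}).toReal ≤ 1 := by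
  have hmX : ∀ n, Measurable (X n) := fun n => (hadapted n).mono (ℱ.le n) le_rfl
  set A : ℕ → Set Ω := fun n => {ω | ∀ k ≤ n, 4 ≤ X k ω} with hAdef
  have hA : ∀ n, MeasurableSet[ℱ n] (A n) := by
    intro n
    have he : A n = ⋂ k ∈ Finset.range (n+1), X k ⁻¹' (Set.Ici 4) := by
      ext ω; simp [hAdef, Nat.lt_succ_iff]
    rw [he]
    exact MeasurableSet.biInter (Set.to_countable _) fun k hk =>
      ((hadapted k).mono (ℱ.mono (by simpa [Nat.lt_succ_iff] using Finset.mem_coe.1 hk)) le_rfl)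
        measurableSet_Ici
  have hAm : ∀ n, MeasurableSet (A n) := fun n => (ℱ.le n) _ (hA n)
  have hind : ∀ n ℓ, (fun ω => if X n ω = ℓ then (1:ℝ) else 0)
      = Set.indicator {ω | X n ω = ℓ} (fun _ => 1) := by
    intro n ℓ; ext ω; by_cases h : X n ω = ℓ <;> simp [Set.indicator_apply, h]
  have hlm : ∀ n ℓ, MeasurableSet {ω | X n ω = ℓ} := fun n ℓ =>
    (hmX n) (measurableSet_singleton ℓ)
  have hindint : ∀ n ℓ, Integrable (fun ω => if X n ω = ℓ then (1:ℝ) else 0) μ := by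
    intro n ℓ; rw [hind]; exact (integrable_const 1).indicator (hlm n ℓ)
  -- a.e. bound X n ≤ n + 4
  have hbd : ∀ n, ∀ᵐ ω ∂μ, X n ω ≤ n + 4 := by
    intro n
    induction n with
    | zero => filter_upwards with ω; rw [hstart ω]
    | succ n ih =>
      have hzero : ∀ ℓ : ℕ, n + 5 < ℓ → μ {ω | X (n+1) ω = ℓ} = 0 := by
        intro ℓ hℓ
        have h1 : ∫ ω, (if X (n+1) ω = ℓ then (1:ℝ) else 0) ∂μ
            = (μ {ω | X (n+1) ω = ℓ}).toReal := by
          rw [hind, integral_indicator_const _ (hlm (n+1) ℓ)]; simp; rfl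
        have h2 : ∫ ω, (if X (n+1) ω = ℓ then (1:ℝ) else 0) ∂μ = 0 := by
          rw [← integral_condExp (ℱ.le n)]
          rw [integral_congr_ae (hkernel n ℓ)]
          have : (fun ω => if 1 ≤ ℓ ∧ ℓ ≤ X n ω + 1 then 1 / (X n ω + 1 : ℝ) else 0)
              =ᵐ[μ] fun _ => (0:ℝ) := by
            filter_upwards [ih] with ω hω
            rw [if_neg]; omega
          rw [integral_congr_ae this, integral_zero]
        rw [h2] at h1
        exact (ENNReal.toReal_eq_zero_iff _).1 h1.symm |>.resolve_right (measure_ne_top μ _)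
      have : ∀ᵐ ω ∂μ, ∀ ℓ : ℕ, n + 5 < ℓ → X (n+1) ω ≠ ℓ := by
        rw [ae_all_iff]
        intro ℓ
        by_cases h : n + 5 < ℓ
        · have := hzero ℓ h
          rw [ae_iff]
          convert this using 2
          ext ω; simp [h]
        · filter_upwards with ω; intro h'; exact absurd h' h
      filter_upwards [this] with ω hω
      by_contra h
      exact hω (X (n+1) ω) (by omega) rfl
  -- the function F n and its integral g
  set F : ℕ → Ω → ℝ := fun n => (A n).indicator (fun ω => (X n ω : ℝ) - 2) with hFdef
  have hXr : ∀ n, Measurable (fun ω => ((X n ω : ℝ))) := fun n =>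
    measurable_from_top.comp (hmX n)
  have hFmeas : ∀ n, Measurable (F n) := fun n =>
    (((hXr n).sub measurable_const)).indicator (hAm n)
  have hFint : ∀ n, Integrable (F n) μ := by
    intro n
    refine integrable_of_bound' (hFmeas n).aestronglyMeasurable ((n:ℝ)+4) ?_
    filter_upwards [hbd n] with ω hω
    by_cases h : ω ∈ A n
    · simp only [hFdef, Set.indicator_of_mem h]
      have h1 : (1:ℝ) ≤ (X n ω:ℝ) := by exact_mod_cast hpos n ω
      have h2 : (X n ω : ℝ) ≤ (n:ℝ)+4 := by exact_mod_cast hω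
      rw [abs_le]; constructor <;> linarith
    · simp only [hFdef, Set.indicator_of_notMem h]
      simp
      positivity
  set g : ℕ → ℝ := fun n => ∫ ω, F n ω ∂μ with hgdef
  have hg0 : g 0 = 2 := by
    have hA0 : A 0 = Set.univ := by
      ext ω; simp only [hAdef, Set.mem_setOf_eq, Set.mem_univ, iff_true]
      intro k hk; interval_cases k; rw [hstart ω]
    have hF0 : F 0 = fun _ => (2:ℝ) := by
      ext ω
      simp only [hFdef, hA0, Set.indicator_univ, hstart ω]
      norm_num
    simp only [hgdef, hF0]
    simp
  -- the recursion g (n+1) = g n / 2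
  have hgrec : ∀ n, g (n+1) = g n / 2 := by
    intro n
    have hAsucc : ∀ ω, ω ∈ A (n+1) ↔ ω ∈ A n ∧ 4 ≤ X (n+1) ω := by
      intro ω
      simp only [hAdef, Set.mem_setOf_eq]
      constructor
      · intro h; exact ⟨fun k hk => h k (by omega), h (n+1) le_rfl⟩
      · rintro ⟨h1, h2⟩ k hk
        rcases Nat.lt_succ_iff_lt_or_eq.1 (Nat.lt_succ_of_le hk) with h | h
        · exact h1 k (by omega)
        · rw [h]; exact h2
    -- decomposition of F (n+1) as a finite sum, a.e.
    have hdecomp : F (n+1) =ᵐ[μ] fun ω => ∑ ℓ ∈ Finset.Icc 4 (n+5),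
        ((ℓ:ℝ) - 2) * ((A n).indicator (fun _ => (1:ℝ)) ω * (if X (n+1) ω = ℓ then 1 else 0)) := by
      filter_upwards [hbd (n+1)] with ω hω
      simp only [hFdef]
      have hsum : ∀ c : ℝ, ∑ ℓ ∈ Finset.Icc 4 (n+5),
          ((ℓ:ℝ) - 2) * (c * (if X (n+1) ω = ℓ then 1 else 0))
          = if X (n+1) ω ∈ Finset.Icc 4 (n+5) then ((X (n+1) ω : ℝ) - 2) * c else 0 := by
        intro c
        rw [Finset.sum_congr rfl (fun ℓ _ => ?_), Finset.sum_ite_eq' (Finset.Icc 4 (n+5))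
          (X (n+1) ω) (fun ℓ => ((ℓ:ℝ) - 2) * c)]
        rcases eq_or_ne ℓ (X (n+1) ω) with h | h
        · subst h; simp
        · simp [h, Ne.symm h]
      by_cases hmem : ω ∈ A n
      · rw [Set.indicator_of_mem hmem, hsum 1]
        by_cases h4 : 4 ≤ X (n+1) ω
        · have hin : X (n+1) ω ∈ Finset.Icc 4 (n+5) := Finset.mem_Icc.2 ⟨h4, by omega⟩
          rw [if_pos hin, Set.indicator_of_mem ((hAsucc ω).2 ⟨hmem, h4⟩)]
          ring
        · have hnin : X (n+1) ω ∉ Finset.Icc 4 (n+5) := by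
            simp only [Finset.mem_Icc]; omega
          rw [if_neg hnin,
            Set.indicator_of_notMem (fun h => h4 ((hAsucc ω).1 h).2)]
      · rw [Set.indicator_of_notMem hmem, hsum 0,
          Set.indicator_of_notMem (fun h => hmem ((hAsucc ω).1 h).1)]
        simp
    -- rewrite each summand as an indicator
    have heqs : ∀ ℓ : ℕ, (fun ω => ((ℓ:ℝ) - 2) *
          ((A n).indicator (fun _ => (1:ℝ)) ω * (if X (n+1) ω = ℓ then 1 else 0)))
          = (A n).indicator (fun ω => ((ℓ:ℝ) - 2) * (if X (n+1) ω = ℓ then 1 else 0)) := by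
      intro ℓ; ext ω
      by_cases h : ω ∈ A n <;>
        simp [Set.indicator_of_mem, Set.indicator_of_notMem, h]
    have htermint : ∀ ℓ : ℕ, Integrable (fun ω => ((ℓ:ℝ) - 2) *
        ((A n).indicator (fun _ => (1:ℝ)) ω * (if X (n+1) ω = ℓ then 1 else 0))) μ := by
      intro ℓ
      rw [heqs ℓ]
      exact ((hindint (n+1) ℓ).const_mul _).indicator (hAm n)
    have hterm : ∀ ℓ : ℕ, ∫ ω, ((ℓ:ℝ) - 2) *
          ((A n).indicator (fun _ => (1:ℝ)) ω * (if X (n+1) ω = ℓ then 1 else 0)) ∂μ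
        = ((ℓ:ℝ) - 2) * ∫ ω in A n,
            (if 1 ≤ ℓ ∧ ℓ ≤ X n ω + 1 then 1 / ((X n ω : ℝ) + 1) else 0) ∂μ := by
      intro ℓ
      rw [heqs ℓ, integral_indicator (hAm n), integral_const_mul]
      congr 1
      rw [← setIntegral_congr_ae (hAm n) ((hkernel n ℓ).mono (fun ω h _ => h)),
        setIntegral_condExp (ℱ.le n) (hindint (n+1) ℓ) (hA n)]
    have hker_int : ∀ ℓ : ℕ, IntegrableOn
        (fun ω => (if 1 ≤ ℓ ∧ ℓ ≤ X n ω + 1 then 1 / ((X n ω : ℝ) + 1) else 0)) (A n) μ := by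
      intro ℓ
      have hm : Measurable (fun ω => if 1 ≤ ℓ ∧ ℓ ≤ X n ω + 1 then 1/((X n ω:ℝ)+1) else 0) :=
        (measurable_from_top
          (f := fun m : ℕ => if 1 ≤ ℓ ∧ ℓ ≤ m + 1 then 1/((m:ℝ)+1) else 0)).comp (hmX n)
      refine integrable_of_bound' hm.aestronglyMeasurable.restrict 1 ?_
      filter_upwards with ω
      by_cases h : 1 ≤ ℓ ∧ ℓ ≤ X n ω + 1
      · rw [if_pos h, abs_of_nonneg (by positivity), div_le_one (by positivity)]
        have h1 : (1:ℝ) ≤ (X n ω : ℝ) := by exact_mod_cast hpos n ω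
        linarith
      · rw [if_neg h]; simp
    have hg1 : g (n+1) = ∑ ℓ ∈ Finset.Icc 4 (n+5), ((ℓ:ℝ) - 2) * ∫ ω in A n,
        (if 1 ≤ ℓ ∧ ℓ ≤ X n ω + 1 then 1 / ((X n ω : ℝ) + 1) else 0) ∂μ := by
      simp only [hgdef]
      rw [integral_congr_ae hdecomp, integral_finset_sum _ (fun ℓ _ => htermint ℓ)]
      exact Finset.sum_congr rfl (fun ℓ _ => hterm ℓ)
    have hg2 : ∑ ℓ ∈ Finset.Icc 4 (n+5), ((ℓ:ℝ) - 2) * ∫ ω in A n,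
        (if 1 ≤ ℓ ∧ ℓ ≤ X n ω + 1 then 1 / ((X n ω : ℝ) + 1) else 0) ∂μ
        = ∫ ω in A n, (∑ ℓ ∈ Finset.Icc 4 (n+5), ((ℓ:ℝ) - 2) *
            (if 1 ≤ ℓ ∧ ℓ ≤ X n ω + 1 then 1 / ((X n ω : ℝ) + 1) else 0)) ∂μ := by
      rw [integral_finset_sum _ (fun ℓ _ => (hker_int ℓ).const_mul _)]
      exact Finset.sum_congr rfl (fun ℓ _ => (integral_const_mul _ _).symm)
    have hg3 : ∫ ω in A n, (∑ ℓ ∈ Finset.Icc 4 (n+5), ((ℓ:ℝ) - 2) *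
            (if 1 ≤ ℓ ∧ ℓ ≤ X n ω + 1 then 1 / ((X n ω : ℝ) + 1) else 0)) ∂μ
        = ∫ ω in A n, (((X n ω : ℝ) - 2)/2) ∂μ := by
      apply setIntegral_congr_ae (hAm n)
      filter_upwards [hbd n] with ω hω hmem
      have h4 : 4 ≤ X n ω := hmem n le_rfl
      exact key_sum (X n ω) (n+5) h4 (by omega)
    have hg4 : ∫ ω in A n, (((X n ω : ℝ) - 2)/2) ∂μ = g n / 2 := by
      simp only [hgdef, hFdef]
      rw [integral_indicator (hAm n), integral_div]
    rw [hg1, hg2, hg3, hg4]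
  -- g n = 2 / 2^n
  have hgval : ∀ n, g n = 2 / 2^n := by
    intro n
    induction n with
    | zero => simpa using hg0
    | succ n ih => rw [hgrec n, ih, pow_succ]; ring
  -- 2 * μ(A n) ≤ g n
  have hmono : ∀ n, 2 * (μ (A n)).toReal ≤ g n := by
    intro n
    have hle : ∀ ω, (A n).indicator (fun _ => (2:ℝ)) ω ≤ F n ω := by
      intro ω
      by_cases h : ω ∈ A n
      · simp only [hFdef, Set.indicator_of_mem h]
        have h4 : 4 ≤ X n ω := h n le_rfl
        have h4' : (4:ℝ) ≤ (X n ω : ℝ) := by exact_mod_cast h4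
        linarith
      · simp only [hFdef, Set.indicator_of_notMem h]
        exact le_refl 0
    have h2int : Integrable ((A n).indicator (fun _ => (2:ℝ))) μ :=
      (integrable_const 2).indicator (hAm n)
    have hmono' := integral_mono h2int (hFint n) hle
    rwa [integral_indicator_const _ (hAm n), smul_eq_mul, mul_comm] at hmono'
  -- conclude
  intro n
  have h1 := hmono n
  rw [hgval n] at h1
  have h2 : (0:ℝ) < 2^n := by positivity
  calc (2:ℝ) ^ n * (μ (A n)).toReal = 2^n * (2 * (μ (A n)).toReal) / 2 := by ring
    _ ≤ 2^n * (2 / 2^n) / 2 := by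
        have := mul_le_mul_of_nonneg_left h1 h2.le
        linarith
    _ = 1 := by field_simp
end

section
/- Let h: (0,1) → ℝ be h(r) = (8/π)√(r(1−r)). Then h satisfies (4/3) h(r) = ∫₀^r ((1−r)/(1−u))² · 2h(u)/(1−u) du + ∫_r^1 (r/u)² · 2h(u)/u du for every r ∈ (0,1). -/
open intervalIntegral Real Set

lemma int1 (r : ℝ) (hr0 : 0 < r) (hr1 : r < 1) :
    (∫ u in (0:ℝ)..r,
        ((1 - r) / (1 - u)) ^ 2 *
          (2 * ((8 / Real.pi) * Real.sqrt (u * (1 - u))) / (1 - u)))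
      = (1 - r) ^ 2 * (32 / (3 * Real.pi)) * (Real.sqrt r) ^ 3 / (Real.sqrt (1 - r)) ^ 3 := by
  have key : ∫ u in (0:ℝ)..r,
      ((1 - r) / (1 - u)) ^ 2 *
        (2 * ((8 / Real.pi) * Real.sqrt (u * (1 - u))) / (1 - u))
      = ((1 - r) ^ 2 * (32 / (3 * Real.pi)) * ((Real.sqrt r) ^ 3 / (Real.sqrt (1 - r)) ^ 3))
        - ((1 - r) ^ 2 * (32 / (3 * Real.pi)) * ((Real.sqrt 0) ^ 3 / (Real.sqrt (1 - 0)) ^ 3)) := by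
    apply intervalIntegral.integral_eq_sub_of_hasDeriv_right_of_le hr0.le
      (f := fun u => (1 - r) ^ 2 * (32 / (3 * Real.pi)) * ((Real.sqrt u) ^ 3 / (Real.sqrt (1 - u)) ^ 3))
    · apply ContinuousOn.mul continuousOn_const
      apply ContinuousOn.div
      · exact ((Real.continuous_sqrt.comp continuous_id).pow 3).continuousOn
      · exact ((Real.continuous_sqrt.comp (continuous_const.sub continuous_id)).pow 3).continuousOn
      · intro u hu
        have h1u : 0 < 1 - u := by simp at hu; linarith [hu.2]
        positivity
    · intro x hx
      obtain ⟨hx0, hxr⟩ := hx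
      have hx1 : x < 1 := lt_trans hxr hr1
      have h1x : 0 < 1 - x := by linarith
      have hS : 0 < Real.sqrt x := Real.sqrt_pos.mpr hx0
      have hT : 0 < Real.sqrt (1 - x) := Real.sqrt_pos.mpr h1x
      set S := Real.sqrt x with hSdef
      set T := Real.sqrt (1 - x) with hTdef
      have hS2 : S ^ 2 = x := Real.sq_sqrt hx0.le
      have hT2 : T ^ 2 = 1 - x := Real.sq_sqrt h1x.le
      have hsum : S ^ 2 + T ^ 2 = 1 := by rw [hS2, hT2]; ring
      have hs3 : HasDerivAt (fun u => (Real.sqrt u) ^ 3) (3 * S ^ 2 * (1 / (2 * S))) x :=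
        (Real.hasDerivAt_sqrt hx0.ne').pow 3
      have ht0 : HasDerivAt (fun u : ℝ => 1 - u) (-1) x := (hasDerivAt_id x).const_sub 1
      have ht : HasDerivAt (fun u => Real.sqrt (1 - u)) (1 / (2 * T) * (-1)) x :=
        (Real.hasDerivAt_sqrt h1x.ne').comp x ht0
      have ht3 : HasDerivAt (fun u => (Real.sqrt (1 - u)) ^ 3)
          (3 * T ^ 2 * (1 / (2 * T) * (-1))) x := ht.pow 3
      have hdiv : HasDerivAt (fun u => (Real.sqrt u) ^ 3 / (Real.sqrt (1 - u)) ^ 3)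
          ((3 * S ^ 2 * (1 / (2 * S)) * T ^ 3 - S ^ 3 * (3 * T ^ 2 * (1 / (2 * T) * (-1))))
            / (T ^ 3) ^ 2) x := hs3.div ht3 (by positivity)
      have hf := hdiv.const_mul ((1 - r) ^ 2 * (32 / (3 * Real.pi)))
      have heq : ((1 - r) ^ 2 * (32 / (3 * Real.pi))) *
          ((3 * S ^ 2 * (1 / (2 * S)) * T ^ 3 - S ^ 3 * (3 * T ^ 2 * (1 / (2 * T) * (-1))))
            / (T ^ 3) ^ 2)
          = ((1 - r) / (1 - x)) ^ 2 *
              (2 * ((8 / Real.pi) * Real.sqrt (x * (1 - x))) / (1 - x)) := by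
        have h1 : 3 * S ^ 2 * (1 / (2 * S)) = 3 / 2 * S := by field_simp
        have h2 : 3 * T ^ 2 * (1 / (2 * T) * (-1)) = -(3 / 2 * T) := by field_simp
        have e1 : 3 * S ^ 2 * (1 / (2 * S)) * T ^ 3 - S ^ 3 * (3 * T ^ 2 * (1 / (2 * T) * (-1)))
            = 3 / 2 * S * T := by
          rw [h1, h2]; linear_combination (3 / 2 * S * T) * hsum
        rw [Real.sqrt_mul hx0.le, ← hSdef, ← hTdef, ← hT2, e1]
        have hpi : Real.pi ≠ 0 := Real.pi_ne_zero
        field_simp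
        ring
      rw [heq] at hf
      exact hf.hasDerivWithinAt
    · apply ContinuousOn.intervalIntegrable
      rw [uIcc_of_le hr0.le]
      apply ContinuousOn.mul
      · apply ContinuousOn.pow
        apply ContinuousOn.div continuousOn_const
          ((continuous_const.sub continuous_id).continuousOn)
        intro u hu
        have : u ≤ r := hu.2
        intro h
        have h' : 1 - u = 0 := h
        linarith
      · apply ContinuousOn.div
        · exact (continuous_const.mul (continuous_const.mul
            (Real.continuous_sqrt.comp (continuous_id.mul (continuous_const.sub continuous_id))))).continuousOn
        · exact (continuous_const.sub continuous_id).continuousOn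
        · intro u hu
          have : u ≤ r := hu.2
          intro h; linarith
  rw [key]
  simp [Real.sqrt_zero]
  ring

lemma int2 (r : ℝ) (hr0 : 0 < r) (hr1 : r < 1) :
    (∫ u in r..(1:ℝ),
        (r / u) ^ 2 * (2 * ((8 / Real.pi) * Real.sqrt (u * (1 - u))) / u))
      = r ^ 2 * (32 / (3 * Real.pi)) * (Real.sqrt (1 - r)) ^ 3 / (Real.sqrt r) ^ 3 := by
  have key : ∫ u in r..(1:ℝ),
      (r / u) ^ 2 * (2 * ((8 / Real.pi) * Real.sqrt (u * (1 - u))) / u)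
      = (-(r ^ 2 * (32 / (3 * Real.pi))) * ((Real.sqrt (1 - 1)) ^ 3 / (Real.sqrt 1) ^ 3))
        - (-(r ^ 2 * (32 / (3 * Real.pi))) * ((Real.sqrt (1 - r)) ^ 3 / (Real.sqrt r) ^ 3)) := by
    apply intervalIntegral.integral_eq_sub_of_hasDeriv_right_of_le hr1.le
      (f := fun u => -(r ^ 2 * (32 / (3 * Real.pi))) * ((Real.sqrt (1 - u)) ^ 3 / (Real.sqrt u) ^ 3))
    · apply ContinuousOn.mul continuousOn_const
      apply ContinuousOn.div
      · exact ((Real.continuous_sqrt.comp (continuous_const.sub continuous_id)).pow 3).continuousOn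
      · exact ((Real.continuous_sqrt.comp continuous_id).pow 3).continuousOn
      · intro u hu
        have hu0 : 0 < u := lt_of_lt_of_le hr0 hu.1
        positivity
    · intro x hx
      obtain ⟨hxr, hx1⟩ := hx
      have hx0 : 0 < x := lt_trans hr0 hxr
      have h1x : 0 < 1 - x := by linarith
      have hS : 0 < Real.sqrt x := Real.sqrt_pos.mpr hx0
      have hT : 0 < Real.sqrt (1 - x) := Real.sqrt_pos.mpr h1x
      set S := Real.sqrt x with hSdef
      set T := Real.sqrt (1 - x) with hTdef
      have hS2 : S ^ 2 = x := Real.sq_sqrt hx0.le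
      have hT2 : T ^ 2 = 1 - x := Real.sq_sqrt h1x.le
      have hsum : S ^ 2 + T ^ 2 = 1 := by rw [hS2, hT2]; ring
      have hs3 : HasDerivAt (fun u => (Real.sqrt u) ^ 3) (3 * S ^ 2 * (1 / (2 * S))) x :=
        (Real.hasDerivAt_sqrt hx0.ne').pow 3
      have ht0 : HasDerivAt (fun u : ℝ => 1 - u) (-1) x := (hasDerivAt_id x).const_sub 1
      have ht : HasDerivAt (fun u => Real.sqrt (1 - u)) (1 / (2 * T) * (-1)) x :=
        (Real.hasDerivAt_sqrt h1x.ne').comp x ht0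
      have ht3 : HasDerivAt (fun u => (Real.sqrt (1 - u)) ^ 3)
          (3 * T ^ 2 * (1 / (2 * T) * (-1))) x := ht.pow 3
      have hdiv : HasDerivAt (fun u => (Real.sqrt (1 - u)) ^ 3 / (Real.sqrt u) ^ 3)
          ((3 * T ^ 2 * (1 / (2 * T) * (-1)) * S ^ 3 - T ^ 3 * (3 * S ^ 2 * (1 / (2 * S))))
            / (S ^ 3) ^ 2) x := ht3.div hs3 (by positivity)
      have hf := hdiv.const_mul (-(r ^ 2 * (32 / (3 * Real.pi))))
      have heq : (-(r ^ 2 * (32 / (3 * Real.pi)))) *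
          ((3 * T ^ 2 * (1 / (2 * T) * (-1)) * S ^ 3 - T ^ 3 * (3 * S ^ 2 * (1 / (2 * S))))
            / (S ^ 3) ^ 2)
          = (r / x) ^ 2 * (2 * ((8 / Real.pi) * Real.sqrt (x * (1 - x))) / x) := by
        have h1 : 3 * S ^ 2 * (1 / (2 * S)) = 3 / 2 * S := by field_simp
        have h2 : 3 * T ^ 2 * (1 / (2 * T) * (-1)) = -(3 / 2 * T) := by field_simp
        have e1 : 3 * T ^ 2 * (1 / (2 * T) * (-1)) * S ^ 3 - T ^ 3 * (3 * S ^ 2 * (1 / (2 * S)))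
            = -(3 / 2 * S * T) := by
          rw [h1, h2]; linear_combination (-(3 / 2 * S * T)) * hsum
        rw [Real.sqrt_mul hx0.le, ← hSdef, ← hTdef, ← hS2, e1]
        have hpi : Real.pi ≠ 0 := Real.pi_ne_zero
        field_simp
        ring
      rw [heq] at hf
      exact hf.hasDerivWithinAt
    · apply ContinuousOn.intervalIntegrable
      rw [uIcc_of_le hr1.le]
      apply ContinuousOn.mul
      · apply ContinuousOn.pow
        apply ContinuousOn.div continuousOn_const continuousOn_id
        intro u hu
        have : r ≤ u := hu.1
        intro h
        simp only [id_eq] at h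
        linarith
      · apply ContinuousOn.div
        · exact (continuous_const.mul (continuous_const.mul
            (Real.continuous_sqrt.comp (continuous_id.mul (continuous_const.sub continuous_id))))).continuousOn
        · exact continuousOn_id
        · intro u hu
          have : r ≤ u := hu.1
          intro h; linarith
  rw [key]
  simp [Real.sqrt_zero]
  ring

/-- The function `h(r) = (8/π)√(r(1−r))` solves the first-moment integral
equation of the homogeneous (`α = 0`) recursive lamination model. -/
theorem h_solves_integral_equation :
    ∀ r ∈ Set.Ioo (0:ℝ) 1,
      (4 / 3) * ((8 / Real.pi) * Real.sqrt (r * (1 - r)))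
        = (∫ u in (0:ℝ)..r,
            ((1 - r) / (1 - u)) ^ 2 *
              (2 * ((8 / Real.pi) * Real.sqrt (u * (1 - u))) / (1 - u)))
          + ∫ u in r..(1:ℝ),
            (r / u) ^ 2 * (2 * ((8 / Real.pi) * Real.sqrt (u * (1 - u))) / u) := by
  rintro r ⟨hr0, hr1⟩
  rw [int1 r hr0 hr1, int2 r hr0 hr1]
  have h1r : 0 < 1 - r := by linarith
  have hS : 0 < Real.sqrt r := Real.sqrt_pos.mpr hr0
  have hT : 0 < Real.sqrt (1 - r) := Real.sqrt_pos.mpr h1r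
  set S := Real.sqrt r with hSdef
  set T := Real.sqrt (1 - r) with hTdef
  have hS2 : S ^ 2 = r := Real.sq_sqrt hr0.le
  have hT2 : T ^ 2 = 1 - r := Real.sq_sqrt h1r.le
  have hsum : S ^ 2 + T ^ 2 = 1 := by rw [hS2, hT2]; ring
  rw [Real.sqrt_mul hr0.le, ← hSdef, ← hTdef, ← hT2, ← hS2]
  have hpi : Real.pi ≠ 0 := Real.pi_ne_zero
  have e1 : (T ^ 2) ^ 2 * (32 / (3 * Real.pi)) * S ^ 3 / T ^ 3
      = 32 / (3 * Real.pi) * (S ^ 3 * T) := by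
    field_simp
  have e2 : (S ^ 2) ^ 2 * (32 / (3 * Real.pi)) * T ^ 3 / S ^ 3
      = 32 / (3 * Real.pi) * (S * T ^ 3) := by
    field_simp
  rw [e1, e2]
  field_simp
  linear_combination (-32) * hsum
end

section
/- Suppose h: (0,1) → ℝ is three times continuously differentiable and satisfies (4/3)h(r) = ∫₀^r ((1−r)/(1−u))² · 2h(u)/(1−u) du + ∫_r^1 (r/u)² · 2h(u)/u du. Then (2/3) h'''(r) = h''(r)(1/(1−r) − 1/r) for all r ∈ (0,1). -/
open intervalIntegral


open intervalIntegral Set MeasureTheory Filter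


private lemma aux_main_ode (h h' h'' h''' A B : ℝ → ℝ)
    (hd1 : ∀ r ∈ Set.Ioo (0:ℝ) 1, HasDerivAt h (h' r) r)
    (hd2 : ∀ r ∈ Set.Ioo (0:ℝ) 1, HasDerivAt h' (h'' r) r)
    (hd3 : ∀ r ∈ Set.Ioo (0:ℝ) 1, HasDerivAt h'' (h''' r) r)
    (hA : ∀ r ∈ Set.Ioo (0:ℝ) 1, HasDerivAt A (2 * h r / (1 - r) ^ 3) r)
    (hB : ∀ r ∈ Set.Ioo (0:ℝ) 1, HasDerivAt B (-(2 * h r / r ^ 3)) r)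
    (heq : ∀ r ∈ Set.Ioo (0:ℝ) 1, (4/3) * h r = (1 - r)^2 * A r + r^2 * B r) :
    ∀ r ∈ Set.Ioo (0:ℝ) 1, (2/3) * h''' r = h'' r * (1 / (1 - r) - 1 / r) := by
  have E1 : ∀ x ∈ Set.Ioo (0:ℝ) 1,
      (4/3) * h' x = (2*x-2) * A x + 2*x * B x + 2*h x/(1-x) - 2*h x/x := by
    intro x hx
    have hx0 : x ≠ 0 := ne_of_gt hx.1
    have hx1 : (1:ℝ) - x ≠ 0 := sub_ne_zero_of_ne (ne_of_lt hx.2).symm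
    have d0 := ((((hasDerivAt_id x).const_sub 1).pow 2).mul (hA x hx)).add
        ((hasDerivAt_pow 2 x).mul (hB x hx))
    have ev : (fun y => (4/3) * h y) =ᶠ[nhds x] (fun y => (1-y)^2 * A y + y^2 * B y) :=
      Filter.eventuallyEq_of_mem (Ioo_mem_nhds hx.1 hx.2) (fun y hy => heq y hy)
    have hu := (d0.congr_of_eventuallyEq ev).unique ((hd1 x hx).const_mul (4/3))
    rw [← hu]
    simp only [id, Pi.pow_apply, Pi.mul_apply, Pi.add_apply, Nat.cast_ofNat, Nat.add_one_sub_one, pow_one] at *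
    field_simp
    ring
  have E2 : ∀ x ∈ Set.Ioo (0:ℝ) 1,
      (4/3) * h'' x = 2*A x + 2*B x - 2*h x/(1-x)^2 - 2*h x/x^2 + 2*h' x/(1-x) - 2*h' x/x := by
    intro x hx
    have hx0 : x ≠ 0 := ne_of_gt hx.1
    have hx1 : (1:ℝ) - x ≠ 0 := sub_ne_zero_of_ne (ne_of_lt hx.2).symm
    have c1 := (((hasDerivAt_id x).const_mul 2).sub_const 2).mul (hA x hx)
    have c2 := ((hasDerivAt_id x).const_mul 2).mul (hB x hx)
    have c3 := ((hd1 x hx).const_mul 2).div ((hasDerivAt_id x).const_sub 1) hx1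
    have c4 := ((hd1 x hx).const_mul 2).div (hasDerivAt_id x) hx0
    have d0 := ((c1.add c2).add c3).sub c4
    have ev : (fun y => (4/3) * h' y) =ᶠ[nhds x]
        (fun y => (2*y-2) * A y + 2*y * B y + 2*h y/(1-y) - 2*h y/y) :=
      Filter.eventuallyEq_of_mem (Ioo_mem_nhds hx.1 hx.2) (fun y hy => E1 y hy)
    have hu := (d0.congr_of_eventuallyEq ev).unique ((hd2 x hx).const_mul (4/3))
    rw [← hu]
    simp only [id, Pi.pow_apply, Pi.mul_apply, Pi.add_apply, Nat.cast_ofNat, Nat.add_one_sub_one, pow_one] at *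
    field_simp
    ring
  intro x hx
  have hx0 : x ≠ 0 := ne_of_gt hx.1
  have hx1 : (1:ℝ) - x ≠ 0 := sub_ne_zero_of_ne (ne_of_lt hx.2).symm
  have e1 := (hA x hx).const_mul (2:ℝ)
  have e2 := (hB x hx).const_mul (2:ℝ)
  have e3 := ((hd1 x hx).const_mul 2).div (((hasDerivAt_id x).const_sub 1).pow 2) (pow_ne_zero 2 hx1)
  have e4 := ((hd1 x hx).const_mul 2).div (hasDerivAt_pow 2 x) (pow_ne_zero 2 hx0)
  have e5 := ((hd2 x hx).const_mul 2).div ((hasDerivAt_id x).const_sub 1) hx1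
  have e6 := ((hd2 x hx).const_mul 2).div (hasDerivAt_id x) hx0
  have d0 := ((((e1.add e2).sub e3).sub e4).add e5).sub e6
  have ev : (fun y => (4/3) * h'' y) =ᶠ[nhds x]
      (fun y => 2*A y + 2*B y - 2*h y/(1-y)^2 - 2*h y/y^2 + 2*h' y/(1-y) - 2*h' y/y) :=
    Filter.eventuallyEq_of_mem (Ioo_mem_nhds hx.1 hx.2) (fun y hy => E2 y hy)
  have hu := (d0.congr_of_eventuallyEq ev).unique ((hd3 x hx).const_mul (4/3))
  have key : (4/3) * h''' x = 2 * h'' x * (1/(1-x) - 1/x) := by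
    rw [← hu]
    simp only [id, Pi.pow_apply, Pi.mul_apply, Pi.add_apply, Nat.cast_ofNat, Nat.add_one_sub_one, pow_one] at *
    field_simp
    ring
  linarith


private lemma aux_sqrt (h h' : ℝ → ℝ)
    (hd1 : ∀ r ∈ Set.Ioo (0:ℝ) 1, HasDerivAt h (h' r) r)
    (hode : ∀ r ∈ Set.Ioo (0:ℝ) 1, h' r = h r / (2*r)) :
    ∀ x ∈ Set.Ioc (0:ℝ) (1/2), h x = (h (1/2) / Real.sqrt (1/2)) * Real.sqrt x := by
  have hq : ∀ y ∈ Set.Ioo (0:ℝ) 1, HasDerivAt (fun z => h z / Real.sqrt z) 0 y := by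
    intro y hy
    have hy0 : y ≠ 0 := ne_of_gt hy.1
    have hs0 : Real.sqrt y ≠ 0 := Real.sqrt_ne_zero'.mpr hy.1
    have hd := (hd1 y hy).div (Real.hasDerivAt_sqrt hy0) hs0
    have hss : Real.sqrt y * Real.sqrt y = y := Real.mul_self_sqrt hy.1.le
    refine hd.congr_deriv ?_
    rw [hode y hy]
    have hrw : 1/(2*Real.sqrt y) = Real.sqrt y/(2*y) := by
      rw [div_eq_div_iff (mul_ne_zero two_ne_zero hs0) (mul_ne_zero two_ne_zero hy0)]; linarith [hss]
    have key : h y / (2*y) * Real.sqrt y - h y * (1/(2*Real.sqrt y)) = 0 := by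
      rw [hrw]; ring
    rw [key, zero_div]
  intro x hx
  have hmem : ∀ y ∈ Set.Icc x (1/2:ℝ), y ∈ Set.Ioo (0:ℝ) 1 := fun y hy =>
    ⟨lt_of_lt_of_le hx.1 hy.1, lt_of_le_of_lt hy.2 (by norm_num)⟩
  have hcont : ContinuousOn (fun z => h z / Real.sqrt z) (Set.Icc x (1/2)) :=
    fun y hy => ((hq y (hmem y hy)).continuousAt).continuousWithinAt
  have hder : ∀ y ∈ Set.Ico x (1/2:ℝ), HasDerivWithinAt (fun z => h z / Real.sqrt z) 0 (Set.Ici y) y :=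
    fun y hy => (hq y (hmem y ⟨hy.1, hy.2.le⟩)).hasDerivWithinAt
  have hconst := constant_of_has_deriv_right_zero hcont hder (1/2) (Set.right_mem_Icc.mpr hx.2)
  have hsx : Real.sqrt x ≠ 0 := Real.sqrt_ne_zero'.mpr hx.1
  rw [hconst]
  exact (div_mul_cancel₀ _ hsx).symm

private lemma aux_sqrt' (h h' : ℝ → ℝ)
    (hd1 : ∀ r ∈ Set.Ioo (0:ℝ) 1, HasDerivAt h (h' r) r)
    (hode : ∀ r ∈ Set.Ioo (0:ℝ) 1, h' r = -(h r) / (2*(1-r))) :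
    ∀ x ∈ Set.Ico (1/2:ℝ) 1, h x = (h (1/2) / Real.sqrt (1/2)) * Real.sqrt (1-x) := by
  have hd : ∀ r ∈ Set.Ioo (0:ℝ) 1, HasDerivAt (fun z => h (1-z)) (-h' (1-r)) r := by
    intro r hr
    have h1r : (1:ℝ) - r ∈ Set.Ioo (0:ℝ) 1 := ⟨by linarith [hr.2], by linarith [hr.1]⟩
    have := (hd1 (1-r) h1r).comp r ((hasDerivAt_id r).const_sub 1)
    exact this.congr_deriv (by ring)
  have hode' : ∀ r ∈ Set.Ioo (0:ℝ) 1, (fun z => -h' (1-z)) r = (fun z => h (1-z)) r / (2*r) := by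
    intro r hr
    have h1r : (1:ℝ) - r ∈ Set.Ioo (0:ℝ) 1 := ⟨by linarith [hr.2], by linarith [hr.1]⟩
    simp only
    rw [hode (1-r) h1r, show (1:ℝ)-(1-r) = r by ring]
    ring
  have := aux_sqrt (fun z => h (1-z)) (fun z => -h' (1-z)) hd hode'
  intro x hx
  have h2 := this (1-x) ⟨by linarith [hx.2], by linarith [hx.1]⟩
  rw [show (1:ℝ)-(1-x) = x by ring, show (1:ℝ)-1/2 = 1/2 by norm_num] at h2
  exact h2


private lemma aux_caseA (h h' A : ℝ → ℝ)
    (hd1 : ∀ r ∈ Set.Ioo (0:ℝ) 1, HasDerivAt h (h' r) r)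
    (hA : ∀ r ∈ Set.Ioo (0:ℝ) 1, HasDerivAt A (2 * h r / (1 - r) ^ 3) r)
    (heq : ∀ r ∈ Set.Ioo (0:ℝ) 1, (4/3) * h r = (1 - r)^2 * A r) :
    ∀ r ∈ Set.Ioo (0:ℝ) 1, h' r = -(h r) / (2*(1-r)) := by
  intro x hx
  have hx0 : x ≠ 0 := ne_of_gt hx.1
  have hx1 : (1:ℝ) - x ≠ 0 := sub_ne_zero_of_ne (ne_of_lt hx.2).symm
  have d0 := (((hasDerivAt_id x).const_sub 1).pow 2).mul (hA x hx)
  have ev : (fun y => (4/3) * h y) =ᶠ[nhds x] (fun y => (1-y)^2 * A y) :=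
    Filter.eventuallyEq_of_mem (Ioo_mem_nhds hx.1 hx.2) (fun y hy => heq y hy)
  have hu := (d0.congr_of_eventuallyEq ev).unique ((hd1 x hx).const_mul (4/3))
  have hAx : A x = (4/3) * h x / (1-x)^2 := by
    have := heq x hx
    field_simp at this ⊢
    linarith
  rw [hAx] at hu
  have h2 : (4/3) * h' x = -((2/3) * h x) / (1-x) := by
    rw [← hu]; simp only [id, Pi.pow_apply, Pi.mul_apply, Pi.add_apply, Nat.cast_ofNat, Nat.add_one_sub_one, pow_one] at *; field_simp; ring
  field_simp at h2 ⊢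
  linarith

private lemma aux_caseB (h h' B : ℝ → ℝ)
    (hd1 : ∀ r ∈ Set.Ioo (0:ℝ) 1, HasDerivAt h (h' r) r)
    (hB : ∀ r ∈ Set.Ioo (0:ℝ) 1, HasDerivAt B (-(2 * h r / r ^ 3)) r)
    (heq : ∀ r ∈ Set.Ioo (0:ℝ) 1, (4/3) * h r = r^2 * B r) :
    ∀ r ∈ Set.Ioo (0:ℝ) 1, h' r = h r / (2*r) := by
  intro x hx
  have hx0 : x ≠ 0 := ne_of_gt hx.1
  have hx1 : (1:ℝ) - x ≠ 0 := sub_ne_zero_of_ne (ne_of_lt hx.2).symm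
  have d0 := (hasDerivAt_pow 2 x).mul (hB x hx)
  have ev : (fun y => (4/3) * h y) =ᶠ[nhds x] (fun y => y^2 * B y) :=
    Filter.eventuallyEq_of_mem (Ioo_mem_nhds hx.1 hx.2) (fun y hy => heq y hy)
  have hu := (d0.congr_of_eventuallyEq ev).unique ((hd1 x hx).const_mul (4/3))
  have hBx : B x = (4/3) * h x / x^2 := by
    have := heq x hx
    field_simp at this ⊢
    linarith
  rw [hBx] at hu
  have h2 : (4/3) * h' x = (2/3) * h x / x := by
    rw [← hu]; simp only [id, Pi.pow_apply, Pi.mul_apply, Pi.add_apply, Nat.cast_ofNat, Nat.add_one_sub_one, pow_one] at *; field_simp; ring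
  field_simp at h2 ⊢
  linarith

/-- If `h` is three times (continuously) differentiable on `(0,1)` and solves
the first-moment integral equation, then `(2/3)h'''(r) = h''(r)(1/(1−r) − 1/r)`
on `(0,1)`. -/
theorem ode_from_integral_equation
    (h h' h'' h''' : ℝ → ℝ)
    (hd1 : ∀ r ∈ Set.Ioo (0:ℝ) 1, HasDerivAt h (h' r) r)
    (hd2 : ∀ r ∈ Set.Ioo (0:ℝ) 1, HasDerivAt h' (h'' r) r)
    (hd3 : ∀ r ∈ Set.Ioo (0:ℝ) 1, HasDerivAt h'' (h''' r) r)
    (hc : ContinuousOn h''' (Set.Ioo (0:ℝ) 1))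
    (heq : ∀ r ∈ Set.Ioo (0:ℝ) 1,
      (4 / 3) * h r
        = (∫ u in (0:ℝ)..r, ((1 - r) / (1 - u)) ^ 2 * (2 * h u / (1 - u)))
          + ∫ u in r..(1:ℝ), (r / u) ^ 2 * (2 * h u / u)) :
    ∀ r ∈ Set.Ioo (0:ℝ) 1,
      (2 / 3) * h''' r = h'' r * (1 / (1 - r) - 1 / r) := by
  set g : ℝ → ℝ := fun u => 2 * h u / (1 - u) ^ 3 with hgdef
  set k : ℝ → ℝ := fun u => 2 * h u / u ^ 3 with hkdef
  set A : ℝ → ℝ := fun t => ∫ u in (0:ℝ)..t, g u with hAdef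
  set B : ℝ → ℝ := fun t => ∫ u in t..(1:ℝ), k u with hBdef
  have hch : ContinuousOn h (Set.Ioo (0:ℝ) 1) :=
    fun y hy => ((hd1 y hy).continuousAt).continuousWithinAt
  have hcg : ContinuousOn g (Set.Ioo (0:ℝ) 1) := by
    apply (continuousOn_const.mul hch).div
      (((continuousOn_const.sub continuousOn_id).pow 3))
    intro y hy
    exact pow_ne_zero 3 (sub_ne_zero_of_ne (ne_of_lt hy.2).symm)
  have hck : ContinuousOn k (Set.Ioo (0:ℝ) 1) := by
    apply (continuousOn_const.mul hch).div (continuousOn_id.pow 3)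
    intro y hy
    exact pow_ne_zero 3 (ne_of_gt hy.1)
  -- rewrite the integral equation
  have heq2 : ∀ r ∈ Set.Ioo (0:ℝ) 1, (4/3) * h r = (1 - r)^2 * A r + r^2 * B r := by
    intro r hr
    have e1 : (∫ u in (0:ℝ)..r, ((1 - r) / (1 - u)) ^ 2 * (2 * h u / (1 - u)))
        = (1-r)^2 * A r := by
      rw [hAdef, ← intervalIntegral.integral_const_mul]
      apply intervalIntegral.integral_congr
      intro u _
      rcases eq_or_ne (1-u) 0 with h0 | h0
      · simp [hgdef, h0]
      · rw [hgdef]; field_simp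
    have e2 : (∫ u in r..(1:ℝ), (r / u) ^ 2 * (2 * h u / u)) = r^2 * B r := by
      rw [hBdef, ← intervalIntegral.integral_const_mul]
      apply intervalIntegral.integral_congr
      intro u _
      rcases eq_or_ne u 0 with h0 | h0
      · simp [hkdef, h0]
      · rw [hkdef]; field_simp
    rw [show (4/3 : ℝ) * h r = (4/3 : ℝ) * h r from rfl, ← e1, ← e2]
    exact heq r hr
  -- integrability propagation
  have hgall : (∃ s ∈ Set.Ioo (0:ℝ) 1, IntervalIntegrable g volume 0 s) →
      ∀ r ∈ Set.Ioo (0:ℝ) 1, IntervalIntegrable g volume 0 r := by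
    rintro ⟨s, hs, hsint⟩ r hr
    rcases le_or_gt r s with hle | hlt
    · refine hsint.mono_set ?_
      rw [Set.uIcc_of_le hr.1.le, Set.uIcc_of_le hs.1.le]
      exact Set.Icc_subset_Icc le_rfl hle
    · refine hsint.trans ((hcg.mono ?_).intervalIntegrable)
      rw [Set.uIcc_of_le hlt.le]
      exact fun y hy => ⟨lt_of_lt_of_le hs.1 hy.1, lt_of_le_of_lt hy.2 hr.2⟩
  have hkall : (∃ s ∈ Set.Ioo (0:ℝ) 1, IntervalIntegrable k volume s 1) →
      ∀ r ∈ Set.Ioo (0:ℝ) 1, IntervalIntegrable k volume r 1 := by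
    rintro ⟨s, hs, hsint⟩ r hr
    rcases le_or_gt s r with hle | hlt
    · refine hsint.mono_set ?_
      rw [Set.uIcc_of_le hr.2.le, Set.uIcc_of_le hs.2.le]
      exact Set.Icc_subset_Icc hle le_rfl
    · refine ((hck.mono ?_).intervalIntegrable).trans hsint
      rw [Set.uIcc_of_le hlt.le]
      exact fun y hy => ⟨lt_of_lt_of_le hr.1 hy.1, lt_of_le_of_lt hy.2 hs.2⟩
  have hAder : (∀ r ∈ Set.Ioo (0:ℝ) 1, IntervalIntegrable g volume 0 r) →
      ∀ r ∈ Set.Ioo (0:ℝ) 1, HasDerivAt A (2 * h r / (1 - r) ^ 3) r := by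
    intro hg r hr
    exact intervalIntegral.integral_hasDerivAt_right (hg r hr)
      (hcg.stronglyMeasurableAtFilter isOpen_Ioo r hr)
      (hcg.continuousAt (Ioo_mem_nhds hr.1 hr.2))
  have hBder : (∀ r ∈ Set.Ioo (0:ℝ) 1, IntervalIntegrable k volume r 1) →
      ∀ r ∈ Set.Ioo (0:ℝ) 1, HasDerivAt B (-(2 * h r / r ^ 3)) r := by
    intro hk r hr
    exact intervalIntegral.integral_hasDerivAt_left (hk r hr)
      (hck.stronglyMeasurableAtFilter isOpen_Ioo r hr)
      (hck.continuousAt (Ioo_mem_nhds hr.1 hr.2))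
  by_cases HG : ∃ s ∈ Set.Ioo (0:ℝ) 1, IntervalIntegrable g volume 0 s
  · by_cases HK : ∃ s ∈ Set.Ioo (0:ℝ) 1, IntervalIntegrable k volume s 1
    · -- main case
      exact aux_main_ode h h' h'' h''' A B hd1 hd2 hd3
        (hAder (hgall HG)) (hBder (hkall HK)) heq2
    · -- k not integrable near 1 : B ≡ 0
      exfalso
      push_neg at HK
      have hB0 : ∀ r ∈ Set.Ioo (0:ℝ) 1, B r = 0 :=
        fun r hr => intervalIntegral.integral_undef (HK r hr)
      have heq3 : ∀ r ∈ Set.Ioo (0:ℝ) 1, (4/3) * h r = (1 - r)^2 * A r := by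
        intro r hr
        have := heq2 r hr
        rw [hB0 r hr] at this
        linarith [this]
      have hode := aux_caseA h h' A hd1 (hAder (hgall HG)) heq3
      have hsol := aux_sqrt' h h' hd1 hode
      apply HK (1/2) (by norm_num)
      rw [intervalIntegrable_iff, Set.uIoc_of_le (by norm_num : (1/2:ℝ) ≤ 1),
        integrableOn_Ioc_iff_integrableOn_Ioo]
      have hφ : MeasureTheory.IntegrableOn
          (fun u => 2 * ((h (1/2) / Real.sqrt (1/2)) * Real.sqrt (1-u)) / u^3)
          (Set.Ioo (1/2:ℝ) 1) volume := by
        refine (ContinuousOn.integrableOn_Icc ?_).mono_set Set.Ioo_subset_Icc_self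
        apply ContinuousOn.div
        · exact continuousOn_const.mul (continuousOn_const.mul
            ((Real.continuous_sqrt.comp (continuous_const.sub continuous_id)).continuousOn))
        · exact (continuous_id.pow 3).continuousOn
        · intro u hu
          exact pow_ne_zero 3 (ne_of_gt (lt_of_lt_of_le (by norm_num) hu.1))
      refine hφ.congr_fun (fun u hu => ?_) measurableSet_Ioo
      rw [hkdef]
      simp only
      rw [hsol u ⟨hu.1.le, hu.2⟩]
  · by_cases HK : ∃ s ∈ Set.Ioo (0:ℝ) 1, IntervalIntegrable k volume s 1
    · -- g not integrable near 0 : A ≡ 0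
      exfalso
      push_neg at HG
      have hA0 : ∀ r ∈ Set.Ioo (0:ℝ) 1, A r = 0 :=
        fun r hr => intervalIntegral.integral_undef (HG r hr)
      have heq3 : ∀ r ∈ Set.Ioo (0:ℝ) 1, (4/3) * h r = r^2 * B r := by
        intro r hr
        have := heq2 r hr
        rw [hA0 r hr] at this
        linarith [this]
      have hode := aux_caseB h h' B hd1 (hBder (hkall HK)) heq3
      have hsol := aux_sqrt h h' hd1 hode
      apply HG (1/2) (by norm_num)
      rw [intervalIntegrable_iff, Set.uIoc_of_le (by norm_num : (0:ℝ) ≤ 1/2)]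
      have hφ : MeasureTheory.IntegrableOn
          (fun u => 2 * ((h (1/2) / Real.sqrt (1/2)) * Real.sqrt u) / (1-u)^3)
          (Set.Ioc (0:ℝ) (1/2)) volume := by
        refine (ContinuousOn.integrableOn_Icc ?_).mono_set Set.Ioc_subset_Icc_self
        apply ContinuousOn.div
        · exact continuousOn_const.mul
            (continuousOn_const.mul Real.continuous_sqrt.continuousOn)
        · exact ((continuous_const.sub continuous_id).pow 3).continuousOn
        · intro u hu
          exact pow_ne_zero 3 (sub_ne_zero_of_ne (by intro e; rw [← e] at hu; linarith [hu.2]))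
      refine hφ.congr_fun (fun u hu => ?_) measurableSet_Ioc
      rw [hgdef]
      simp only
      rw [hsol u hu]
    · -- both degenerate: h ≡ 0
      exfalso
      push_neg at HG HK
      have hA0 : ∀ r ∈ Set.Ioo (0:ℝ) 1, A r = 0 :=
        fun r hr => intervalIntegral.integral_undef (HG r hr)
      have hB0 : ∀ r ∈ Set.Ioo (0:ℝ) 1, B r = 0 :=
        fun r hr => intervalIntegral.integral_undef (HK r hr)
      have hh0 : ∀ r ∈ Set.Ioo (0:ℝ) 1, h r = 0 := by
        intro r hr
        have := heq2 r hr
        rw [hA0 r hr, hB0 r hr] at this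
        linarith [this]
      apply HG (1/2) (by norm_num)
      rw [intervalIntegrable_iff, Set.uIoc_of_le (by norm_num : (0:ℝ) ≤ 1/2)]
      refine (integrableOn_zero (ε' := ℝ)).congr_fun (fun u hu => ?_) measurableSet_Ioc
      rw [hgdef]
      simp only
      rw [hh0 u ⟨hu.1, lt_of_le_of_lt hu.2 (by norm_num)⟩]
      simp
end

section
/- Let S be a finite collection of pairwise noncrossing chords of the unit circle (a figela) and let Feet(S) be the set of endpoints of its chords. For x,y ∈ S¹ \ Feet(S) let H_S(x,y) be the number of chords of S meeting the chord [xy]. Then for all x,y,z ∈ S¹ \ Feet(S): H_S(x,z) ≤ H_S(x,y) + H_S(y,z). -/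
noncomputable def crossf (a b w : ℂ) : ℝ := ((starRingEnd ℂ) (b - a) * (w - a)).im

lemma crossf_combo (a b u v : ℂ) (s t : ℝ) (hst : s + t = 1) :
    crossf a b (s • u + t • v) = s * crossf a b u + t * crossf a b v := by
  simp only [crossf, Complex.real_smul, Complex.mul_im, Complex.sub_re, Complex.sub_im,
    Complex.add_re, Complex.add_im, Complex.mul_re, Complex.ofReal_re, Complex.ofReal_im,
    Complex.conj_re, Complex.conj_im]
  have ht : t = 1 - s := by linarith
  subst ht; ring

lemma crossf_zero_line (a b w : ℂ) (hab : a ≠ b) (h : crossf a b w = 0) :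
    ∃ t : ℝ, w = a + t • (b - a) := by
  have hc : b - a ≠ 0 := sub_ne_zero.mpr (Ne.symm hab)
  set c := b - a with hcdef
  have h' : ((starRingEnd ℂ) c * (w - a)).im = 0 := h
  have hre : ((starRingEnd ℂ) c * (w - a)) = (((starRingEnd ℂ) c * (w - a)).re : ℂ) := by
    apply Complex.ext
    · simp
    · simp [h']
  refine ⟨((starRingEnd ℂ) c * (w - a)).re / Complex.normSq c, ?_⟩
  have hns : (Complex.normSq c : ℂ) = (starRingEnd ℂ) c * c := by
    rw [mul_comm, Complex.mul_conj]
  have hns0 : Complex.normSq c ≠ 0 := (Complex.normSq_pos.mpr hc).ne'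
  have key : w - a = (((starRingEnd ℂ) c * (w - a)).re / Complex.normSq c : ℝ) • c := by
    rw [Complex.real_smul]
    push_cast
    rw [div_mul_eq_mul_div, eq_div_iff (by exact_mod_cast hns0)]
    rw [hns]
    rw [← hre]; ring
  linear_combination key

lemma mem_segment_of_line (a b w : ℂ) (ha : Complex.normSq a = 1) (hb : Complex.normSq b = 1)
    (hab : a ≠ b) (t : ℝ) (hw : w = a + t • (b - a)) (hn : Complex.normSq w ≤ 1) :
    w ∈ segment ℝ a b := by
  have hC : 0 < (b.re - a.re)^2 + (b.im - a.im)^2 := by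
    rcases lt_or_ge 0 ((b.re - a.re)^2 + (b.im - a.im)^2) with h | h
    · exact h
    · exfalso; apply hab; apply Complex.ext <;> nlinarith [sq_nonneg (b.re - a.re), sq_nonneg (b.im - a.im)]
  have hkey : Complex.normSq w - 1 = (t^2 - t) * ((b.re - a.re)^2 + (b.im - a.im)^2) := by
    subst hw
    simp only [Complex.normSq_apply] at ha hb ⊢
    simp only [Complex.add_re, Complex.add_im, Complex.real_smul, Complex.mul_re,
      Complex.mul_im, Complex.ofReal_re, Complex.ofReal_im, Complex.sub_re, Complex.sub_im]
    linear_combination (1 - t) * ha + t * hb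
  have hq : t^2 - t ≤ 0 := by
    by_contra hcon
    push_neg at hcon
    nlinarith
  have ht0 : 0 ≤ t := by nlinarith [sq_nonneg t]
  have ht1 : t ≤ 1 := by nlinarith [sq_nonneg (t-1)]
  rw [segment_eq_image']
  exact ⟨t, ⟨ht0, ht1⟩, hw.symm⟩

lemma eq_of_segment_normSq (a b w : ℂ) (ha : Complex.normSq a = 1) (hb : Complex.normSq b = 1)
    (hw : w ∈ segment ℝ a b) (hn : Complex.normSq w = 1) : w = a ∨ w = b := by
  obtain ⟨s, t, hs, ht, hst, hwe⟩ := hw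
  rcases eq_or_ne a b with rfl | hab
  · left
    rw [← hwe, ← add_smul, hst, one_smul]
  · have hC : 0 < (b.re - a.re)^2 + (b.im - a.im)^2 := by
      rcases lt_or_ge 0 ((b.re - a.re)^2 + (b.im - a.im)^2) with h | h
      · exact h
      · exfalso; apply hab; apply Complex.ext <;> nlinarith [sq_nonneg (b.re - a.re), sq_nonneg (b.im - a.im)]
    have hkey : Complex.normSq w - 1 = -(s*t) * ((b.re - a.re)^2 + (b.im - a.im)^2) := by
      rw [← hwe]
      simp only [Complex.normSq_apply] at ha hb ⊢
      simp only [Complex.add_re, Complex.add_im, Complex.real_smul, Complex.mul_re,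
        Complex.mul_im, Complex.ofReal_re, Complex.ofReal_im]
      have ht' : t = 1 - s := by linarith
      subst ht'
      linear_combination s * ha + (1 - s) * hb
    have hst0 : s * t = 0 := by nlinarith [mul_nonneg hs ht]
    rcases mul_eq_zero.mp hst0 with h | h
    · right; rw [← hwe, h, zero_smul, zero_add, show t = 1 by linarith, one_smul]
    · left; rw [← hwe, h, zero_smul, add_zero, show s = 1 by linarith, one_smul]

lemma ivt_crossf (a b u v : ℂ) (h : crossf a b u * crossf a b v < 0) :
    ∃ q ∈ segment ℝ u v, crossf a b q = 0 := by
  set fu := crossf a b u with hfu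
  set fv := crossf a b v with hfv
  have hne : fu - fv ≠ 0 := by
    intro h0
    have : fu = fv := by linarith
    rw [this] at h; nlinarith
  set s := fu / (fu - fv) with hs
  have hbounds : 0 ≤ s ∧ s ≤ 1 := by
    rcases mul_neg_iff.mp h with ⟨h1, h2⟩ | ⟨h1, h2⟩
    · have hpos : 0 < fu - fv := by linarith
      constructor
      · exact div_nonneg h1.le hpos.le
      · rw [hs, div_le_one hpos]; linarith
    · have hneg : fu - fv < 0 := by linarith
      constructor
      · rw [hs, le_div_iff_of_neg hneg]; linarith
      · rw [hs, div_le_one_iff]; exact Or.inr (Or.inr ⟨hneg, by linarith⟩)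
  refine ⟨(1 - s) • u + s • v, ?_, ?_⟩
  · exact ⟨1 - s, s, by linarith [hbounds.2], hbounds.1, by ring, rfl⟩
  rw [crossf_combo a b u v _ _ (by ring), ← hfu, ← hfv, hs]
  field_simp
  ring
  


lemma seg_normSq_le (u v w : ℂ) (hu : Complex.normSq u = 1) (hv : Complex.normSq v = 1)
    (hw : w ∈ segment ℝ u v) : Complex.normSq w ≤ 1 := by
  obtain ⟨s, t, hs, ht, hst, rfl⟩ := hw
  have hu2 : ‖u‖^2 = 1 := by rw [Complex.sq_norm, hu]
  have hv2 : ‖v‖^2 = 1 := by rw [Complex.sq_norm, hv]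
  have hnu : ‖u‖ = 1 := by nlinarith [norm_nonneg u]
  have hnv : ‖v‖ = 1 := by nlinarith [norm_nonneg v]
  have h1 : ‖s • u + t • v‖ ≤ 1 := by
    calc ‖s • u + t • v‖ ≤ ‖s • u‖ + ‖t • v‖ := norm_add_le _ _
    _ = |s| * ‖u‖ + |t| * ‖v‖ := by rw [norm_smul, norm_smul]; simp
    _ = 1 := by rw [hnu, hnv, abs_of_nonneg hs, abs_of_nonneg ht]; linarith
  calc Complex.normSq (s • u + t • v) = ‖s • u + t • v‖^2 := by
        rw [← Complex.sq_norm]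
  _ ≤ 1 := by nlinarith [norm_nonneg (s • u + t • v)]

lemma chord_split (a b x y z : ℂ)
    (hna : Complex.normSq a = 1) (hnb : Complex.normSq b = 1)
    (hnx : Complex.normSq x = 1) (hny : Complex.normSq y = 1)
    (hnz : Complex.normSq z = 1) (hab : a ≠ b)
    (hxa : x ≠ a) (hxb : x ≠ b) (hya : y ≠ a) (hyb : y ≠ b) (hza : z ≠ a) (hzb : z ≠ b)
    (h : (segment ℝ a b ∩ segment ℝ x z).Nonempty) :
    (segment ℝ a b ∩ segment ℝ x y).Nonempty ∨ (segment ℝ a b ∩ segment ℝ y z).Nonempty := by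
  obtain ⟨p, hp1, hp2⟩ := h
  -- crossf vanishes nowhere on circle except a, b
  have key : ∀ w : ℂ, Complex.normSq w = 1 → w ≠ a → w ≠ b → crossf a b w ≠ 0 := by
    intro w hw hwa hwb hzero
    obtain ⟨t, ht⟩ := crossf_zero_line a b w hab hzero
    have := mem_segment_of_line a b w hna hnb hab t ht (le_of_eq hw)
    rcases eq_of_segment_normSq a b w hna hnb this hw with h | h
    · exact hwa h
    · exact hwb h
  have hfx := key x hnx hxa hxb
  have hfy := key y hny hya hyb
  have hfz := key z hnz hza hzb
  have fa : crossf a b a = 0 := by simp [crossf]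
  have fb : crossf a b b = 0 := by
    have : (starRingEnd ℂ) (b - a) * (b - a) = (Complex.normSq (b - a) : ℂ) := by
      rw [mul_comm, Complex.mul_conj]
    simp only [crossf, Complex.mul_im, Complex.sub_re, Complex.sub_im, Complex.conj_re,
      Complex.conj_im]
    ring
  have fp0 : crossf a b p = 0 := by
    obtain ⟨s, t, hs, ht, hst, rfl⟩ := hp1
    rw [crossf_combo a b a b s t hst, fa, fb]; ring
  -- p on segment x z forces opposite signs
  have hxz : crossf a b x * crossf a b z < 0 := by
    obtain ⟨s, t, hs, ht, hst, hpe⟩ := hp2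
    have hcombo : s * crossf a b x + t * crossf a b z = 0 := by
      rw [← crossf_combo a b x z s t hst, hpe, fp0]
    rcases hfx.lt_or_gt with h1 | h1 <;> rcases hfz.lt_or_gt with h2 | h2 <;>
      nlinarith [mul_nonneg hs ht, mul_le_mul_of_nonneg_left h1.le hs, mul_le_mul_of_nonneg_left h2.le ht,
        mul_le_mul_of_nonneg_left h1.le ht, mul_le_mul_of_nonneg_left h2.le hs]
  have final : ∀ u v : ℂ, Complex.normSq u = 1 → Complex.normSq v = 1 →
      crossf a b u * crossf a b v < 0 → (segment ℝ a b ∩ segment ℝ u v).Nonempty := by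
    intro u v hu hv huv
    obtain ⟨q, hq1, hq2⟩ := ivt_crossf a b u v huv
    obtain ⟨t, ht⟩ := crossf_zero_line a b q hab hq2
    have hqn : Complex.normSq q ≤ 1 := seg_normSq_le u v q hu hv hq1
    exact ⟨q, mem_segment_of_line a b q hna hnb hab t ht hqn, hq1⟩
  rcases lt_or_gt_of_ne hfy with hy1 | hy1
  · rcases hfx.lt_or_gt with hx1 | hx1
    · -- fx < 0, fy < 0, so fz > 0, pair y z
      right; exact final y z hny hnz (by nlinarith)
    · left; exact final x y hnx hny (by nlinarith)
  · rcases hfx.lt_or_gt with hx1 | hx1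
    · left; exact final x y hnx hny (by nlinarith)
    · right; exact final y z hny hnz (by nlinarith)


/-- The height `H_S(x,y)`: the number of chords of the figela `S` whose
(closed) segment meets the segment `[xy]`. -/
noncomputable def figelaHeight (S : Finset (ℂ × ℂ)) (x y : ℂ) : ℕ :=
  {c : ℂ × ℂ | c ∈ S ∧ (segment ℝ c.1 c.2 ∩ segment ℝ x y).Nonempty}.ncard

/-- Triangle inequality for the height of a figela: for a finite collection of
pairwise noncrossing chords of the unit circle and points `x, y, z` of the
circle which are not feet of `S`, `H_S(x,z) ≤ H_S(x,y) + H_S(y,z)`. -/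
theorem figelaHeight_triangle
    (S : Finset (ℂ × ℂ))
    (hfeet : ∀ c ∈ S, c.1 ∈ Metric.sphere (0:ℂ) 1 ∧ c.2 ∈ Metric.sphere (0:ℂ) 1
      ∧ c.1 ≠ c.2)
    (hcross : ∀ c ∈ S, ∀ d ∈ S, c ≠ d →
      openSegment ℝ c.1 c.2 ∩ openSegment ℝ d.1 d.2 = ∅)
    (x y z : ℂ)
    (hx : x ∈ Metric.sphere (0:ℂ) 1) (hy : y ∈ Metric.sphere (0:ℂ) 1)
    (hz : z ∈ Metric.sphere (0:ℂ) 1)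
    (hxS : ∀ c ∈ S, x ≠ c.1 ∧ x ≠ c.2)
    (hyS : ∀ c ∈ S, y ≠ c.1 ∧ y ≠ c.2)
    (hzS : ∀ c ∈ S, z ≠ c.1 ∧ z ≠ c.2) :
    figelaHeight S x z ≤ figelaHeight S x y + figelaHeight S y z := by
  have sphere_normSq : ∀ w : ℂ, w ∈ Metric.sphere (0:ℂ) 1 → Complex.normSq w = 1 := by
    intro w hw
    rw [mem_sphere_zero_iff_norm] at hw
    rw [← Complex.sq_norm, hw]; norm_num
  set A := {c : ℂ × ℂ | c ∈ S ∧ (segment ℝ c.1 c.2 ∩ segment ℝ x z).Nonempty} with hA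
  set B := {c : ℂ × ℂ | c ∈ S ∧ (segment ℝ c.1 c.2 ∩ segment ℝ x y).Nonempty} with hB
  set C := {c : ℂ × ℂ | c ∈ S ∧ (segment ℝ c.1 c.2 ∩ segment ℝ y z).Nonempty} with hC
  have hBf : B.Finite := Set.Finite.subset S.finite_toSet (fun c hc => hc.1)
  have hCf : C.Finite := Set.Finite.subset S.finite_toSet (fun c hc => hc.1)
  have hsub : A ⊆ B ∪ C := by
    rintro c ⟨hcS, hne⟩
    obtain ⟨h1, h2, h3⟩ := hfeet c hcS
    rcases chord_split c.1 c.2 x y z (sphere_normSq _ h1) (sphere_normSq _ h2)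
        (sphere_normSq _ hx) (sphere_normSq _ hy) (sphere_normSq _ hz) h3
        (hxS c hcS).1 (hxS c hcS).2 (hyS c hcS).1 (hyS c hcS).2
        (hzS c hcS).1 (hzS c hcS).2 hne with h | h
    · exact Or.inl ⟨hcS, h⟩
    · exact Or.inr ⟨hcS, h⟩
  calc figelaHeight S x z = A.ncard := rfl
  _ ≤ (B ∪ C).ncard := Set.ncard_le_ncard hsub (hBf.union hCf)
  _ ≤ B.ncard + C.ncard := Set.ncard_union_le B C
  _ = figelaHeight S x y + figelaHeight S y z := rfl
end

section
/- Let U, X₁, X₂ be independent uniform on [0,1]. The probability that X₁ and X₂ lie on opposite sides of U equals 1/3, and conditionally on this event the larger of the two lengths U ∨ (1−U) has density 12 m (1−m) on [1/2, 1]. -/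
open MeasureTheory

/-- The law of `(U, X₁, X₂)`: three independent uniform variables on `[0,1]`. -/
noncomputable def cubeMeasure : Measure (ℝ × ℝ × ℝ) :=
  (volume.restrict (Set.Icc (0:ℝ) 1)).prod
    ((volume.restrict (Set.Icc (0:ℝ) 1)).prod (volume.restrict (Set.Icc (0:ℝ) 1)))

/-- The event that `X₁` and `X₂` lie on opposite sides of `U`. -/
def oppositeSides : Set (ℝ × ℝ × ℝ) :=
  {p | (p.2.1 < p.1 ∧ p.1 < p.2.2) ∨ (p.2.2 < p.1 ∧ p.1 < p.2.1)}

lemma oppositeSides_measurable : MeasurableSet oppositeSides := by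
  unfold oppositeSides
  apply MeasurableSet.union
  · exact MeasurableSet.inter
      (measurableSet_lt (measurable_fst.comp measurable_snd) measurable_fst)
      (measurableSet_lt measurable_fst (measurable_snd.comp measurable_snd))
  · exact MeasurableSet.inter
      (measurableSet_lt (measurable_snd.comp measurable_snd) measurable_fst)
      (measurableSet_lt measurable_fst (measurable_fst.comp measurable_snd))

/-- For `u ∈ [0,1]`, the slice measure of `oppositeSides` at `u`. -/
lemma slice_measure {u : ℝ} (hu : u ∈ Set.Icc (0:ℝ) 1) :
    ((volume.restrict (Set.Icc (0:ℝ) 1)).prod (volume.restrict (Set.Icc (0:ℝ) 1)))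
      (Prod.mk u ⁻¹' oppositeSides) = ENNReal.ofReal (2 * u * (1 - u)) := by
  obtain ⟨hu0, hu1⟩ := hu
  have hpre : Prod.mk u ⁻¹' oppositeSides
      = (Set.Iio u ×ˢ Set.Ioi u) ∪ (Set.Ioi u ×ˢ Set.Iio u) := by
    ext ⟨x, y⟩
    simp [oppositeSides, Set.mem_prod, and_comm]
  rw [hpre]
  have hdisj : Disjoint (Set.Iio u ×ˢ Set.Ioi u) (Set.Ioi u ×ˢ Set.Iio u) := by
    rw [Set.disjoint_left]
    rintro ⟨x, y⟩ ⟨hx, _⟩ ⟨hx', _⟩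
    simp only [Set.mem_Iio] at hx
    simp only [Set.mem_Ioi] at hx'
    exact absurd hx' (not_lt.2 hx.le)
  rw [measure_union hdisj ((measurableSet_Ioi.prod measurableSet_Iio))]
  rw [Measure.prod_prod, Measure.prod_prod]
  have h1 : (volume.restrict (Set.Icc (0:ℝ) 1)) (Set.Iio u) = ENNReal.ofReal u := by
    rw [Measure.restrict_apply measurableSet_Iio]
    have : Set.Iio u ∩ Set.Icc (0:ℝ) 1 = Set.Ico 0 u := by
      ext x
      constructor
      · rintro ⟨hx, hx0, _⟩; exact ⟨hx0, hx⟩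
      · rintro ⟨hx0, hx⟩; exact ⟨hx, hx0, le_trans (le_of_lt hx) hu1⟩
    rw [this, Real.volume_Ico, sub_zero]
  have h2 : (volume.restrict (Set.Icc (0:ℝ) 1)) (Set.Ioi u) = ENNReal.ofReal (1 - u) := by
    rw [Measure.restrict_apply measurableSet_Ioi]
    have : Set.Ioi u ∩ Set.Icc (0:ℝ) 1 = Set.Ioc u 1 := by
      ext x
      constructor
      · rintro ⟨hx, _, hx1⟩; exact ⟨hx, hx1⟩
      · rintro ⟨hx, hx1⟩; exact ⟨hx, le_trans hu0 (le_of_lt hx), hx1⟩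
    rw [this, Real.volume_Ioc]
  rw [h1, h2, ← ENNReal.ofReal_mul hu0, ← ENNReal.ofReal_mul (by linarith),
    ← ENNReal.ofReal_add (by nlinarith) (by nlinarith)]
  ring_nf

lemma poly_int (c d : ℝ) :
    ∫ x in c..d, 2 * x * (1 - x) = (d ^ 2 - c ^ 2) - (2 / 3) * (d ^ 3 - c ^ 3) := by
  have h : ∀ x : ℝ, 2 * x * (1 - x) = 2 * x - 2 * x ^ 2 := fun x => by ring
  simp_rw [h]
  have i1 : IntervalIntegrable (fun x : ℝ => 2 * x) volume c d :=
    (by continuity : Continuous fun x : ℝ => 2 * x).intervalIntegrable c d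
  have i2 : IntervalIntegrable (fun x : ℝ => 2 * x ^ 2) volume c d :=
    (by continuity : Continuous fun x : ℝ => 2 * x ^ 2).intervalIntegrable c d
  rw [intervalIntegral.integral_sub i1 i2,
    intervalIntegral.integral_const_mul, intervalIntegral.integral_const_mul,
    integral_id, integral_pow]
  ring

lemma poly_int' (a b : ℝ) :
    ∫ m in a..b, 12 * m * (1 - m) = 6 * (b ^ 2 - a ^ 2) - 4 * (b ^ 3 - a ^ 3) := by
  have h : ∀ x : ℝ, 12 * x * (1 - x) = 12 * x - 12 * x ^ 2 := fun x => by ring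
  simp_rw [h]
  have i1 : IntervalIntegrable (fun x : ℝ => 12 * x) volume a b :=
    (by continuity : Continuous fun x : ℝ => 12 * x).intervalIntegrable a b
  have i2 : IntervalIntegrable (fun x : ℝ => 12 * x ^ 2) volume a b :=
    (by continuity : Continuous fun x : ℝ => 12 * x ^ 2).intervalIntegrable a b
  rw [intervalIntegral.integral_sub i1 i2,
    intervalIntegral.integral_const_mul, intervalIntegral.integral_const_mul,
    integral_id, integral_pow]
  ring

/-- Lower integral of `ofReal (2u(1-u))` on `Icc c d ⊆ [0,1]`. -/
lemma lint_Icc {c d : ℝ} (hc : 0 ≤ c) (hcd : c ≤ d) (hd : d ≤ 1) :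
    ∫⁻ u in Set.Icc c d, ENNReal.ofReal (2 * u * (1 - u))
      = ENNReal.ofReal (∫ u in c..d, 2 * u * (1 - u)) := by
  rw [intervalIntegral.integral_of_le hcd, ← MeasureTheory.integral_Icc_eq_integral_Ioc,
    MeasureTheory.ofReal_integral_eq_lintegral_ofReal
      (Continuous.integrableOn_Icc (by continuity))
      (by
        filter_upwards [ae_restrict_mem measurableSet_Icc] with x hx
        obtain ⟨hx0, hx1⟩ := hx
        simp only [Pi.zero_apply]
        nlinarith)]


lemma lint_union {s t : Set ℝ} (hs : MeasurableSet s) (ht : MeasurableSet t)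
    (h0 : volume (s ∩ t) = 0) (f : ℝ → ENNReal) :
    ∫⁻ x in s ∪ t, f x = (∫⁻ x in s, f x) + ∫⁻ x in t, f x := by
  have hst : s ∪ t = s ∪ (t \ s) := by rw [Set.union_diff_self]
  rw [hst, lintegral_union (ht.diff hs) Set.disjoint_sdiff_right]
  congr 1
  apply setLIntegral_congr
  rw [MeasureTheory.diff_ae_eq_self]
  rwa [Set.inter_comm] at h0

/-- With probability `1/3`, `X₁` and `X₂` fall on opposite sides of `U`;
conditionally on this event, the larger length `U ∨ (1−U)` has density
`12m(1−m)` on `[1/2,1]`. -/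
theorem oppositeSides_prob_and_density :
    cubeMeasure oppositeSides = ENNReal.ofReal (1 / 3) ∧
    ∀ a b : ℝ, 1 / 2 ≤ a → a ≤ b → b ≤ 1 →
      cubeMeasure (oppositeSides ∩ {p | max p.1 (1 - p.1) ∈ Set.Icc a b})
        = ENNReal.ofReal ((1 / 3) * ∫ m in a..b, 12 * m * (1 - m)) := by
  constructor
  · rw [cubeMeasure, Measure.prod_apply oppositeSides_measurable]
    have : ∫⁻ u in Set.Icc (0:ℝ) 1,
        ((volume.restrict (Set.Icc (0:ℝ) 1)).prod (volume.restrict (Set.Icc (0:ℝ) 1)))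
          (Prod.mk u ⁻¹' oppositeSides)
        = ∫⁻ u in Set.Icc (0:ℝ) 1, ENNReal.ofReal (2 * u * (1 - u)) :=
      setLIntegral_congr_fun measurableSet_Icc (fun u hu => slice_measure hu)
    rw [this, lint_Icc le_rfl zero_le_one le_rfl, poly_int]
    norm_num
  · intro a b ha hab hb
    set T : Set ℝ := {u : ℝ | max u (1 - u) ∈ Set.Icc a b} with hTdef
    have hT : MeasurableSet T :=
      (measurable_id.max (measurable_const.sub measurable_id)) measurableSet_Icc
    have hBmeas : MeasurableSet {p : ℝ × ℝ × ℝ | max p.1 (1 - p.1) ∈ Set.Icc a b} :=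
      (measurable_fst.max (measurable_const.sub measurable_fst)) measurableSet_Icc
    rw [cubeMeasure, Measure.prod_apply (oppositeSides_measurable.inter hBmeas)]
    have key : ∀ u ∈ Set.Icc (0:ℝ) 1,
        ((volume.restrict (Set.Icc (0:ℝ) 1)).prod (volume.restrict (Set.Icc (0:ℝ) 1)))
          (Prod.mk u ⁻¹' (oppositeSides ∩ {p | max p.1 (1 - p.1) ∈ Set.Icc a b}))
        = T.indicator (fun u => ENNReal.ofReal (2 * u * (1 - u))) u := by
      intro u hu
      by_cases h : u ∈ T
      · rw [Set.indicator_of_mem h]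
        have hpre : Prod.mk u ⁻¹' (oppositeSides ∩ {p | max p.1 (1 - p.1) ∈ Set.Icc a b})
            = Prod.mk u ⁻¹' oppositeSides := by
          ext q
          simp only [Set.mem_preimage, Set.mem_inter_iff, Set.mem_setOf_eq]
          exact and_iff_left h
        rw [hpre]
        exact slice_measure hu
      · rw [Set.indicator_of_notMem h]
        have hpre : Prod.mk u ⁻¹' (oppositeSides ∩ {p | max p.1 (1 - p.1) ∈ Set.Icc a b})
            = ∅ := by
          ext q
          simp only [Set.mem_preimage, Set.mem_inter_iff, Set.mem_setOf_eq,
            Set.mem_empty_iff_false, iff_false, not_and]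
          exact fun _ => h
        rw [hpre, measure_empty]
    rw [setLIntegral_congr_fun measurableSet_Icc key,
      lintegral_indicator hT _, Measure.restrict_restrict hT]
    have hTI : T ∩ Set.Icc (0:ℝ) 1 = Set.Icc (1 - b) (1 - a) ∪ Set.Icc a b := by
      ext u
      simp only [hTdef, Set.mem_inter_iff, Set.mem_setOf_eq, Set.mem_Icc, Set.mem_union]
      constructor
      · rintro ⟨⟨h1, h2⟩, h3, h4⟩
        rcases le_total (1 - u) u with hcase | hcase
        · rw [max_eq_left hcase] at h1 h2
          right; exact ⟨h1, h2⟩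
        · rw [max_eq_right hcase] at h1 h2
          left; constructor <;> linarith
      · rintro (⟨h1, h2⟩ | ⟨h1, h2⟩)
        · have hmax : max u (1 - u) = 1 - u := max_eq_right (by linarith)
          rw [hmax]
          refine ⟨⟨by linarith, by linarith⟩, by linarith, by linarith⟩
        · have hmax : max u (1 - u) = u := max_eq_left (by linarith)
          rw [hmax]
          refine ⟨⟨h1, h2⟩, by linarith, by linarith⟩
    rw [hTI, lint_union measurableSet_Icc measurableSet_Icc
        (measure_mono_null
          (show Set.Icc (1 - b) (1 - a) ∩ Set.Icc a b ⊆ Set.Icc a (1 - a) from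
           fun u hu => by
            simp only [Set.mem_inter_iff, Set.mem_Icc] at hu ⊢
            exact ⟨hu.2.1, hu.1.2⟩)
          (by
            rw [Real.volume_Icc]
            exact ENNReal.ofReal_eq_zero.2 (by linarith))),
      lint_Icc (by linarith) (by linarith) (by linarith),
      lint_Icc (by linarith) hab hb,
      ← ENNReal.ofReal_add
        (intervalIntegral.integral_nonneg (by linarith)
          (fun x hx => by obtain ⟨hx1, hx2⟩ := hx; nlinarith))
        (intervalIntegral.integral_nonneg hab
          (fun x hx => by obtain ⟨hx1, hx2⟩ := hx; nlinarith))]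
    congr 1
    rw [poly_int, poly_int, poly_int']
    ring
end
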